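/- arXiv:2009.01589 — 9 statements merged into one kernel-verified Lean document; each statement's English description precedes it below -/
import Mathlib

section
/- For integers D ≥ 1 and d ≥ 0, the number of lattice points z in ℤ^D with ‖z‖₁ ≤ d equals ∑_{k=0}^{D} C(D,k)·C(d+D-k, D), where C(n,k) denotes the binomial coefficient (with C(n,k)=0 when n<k). -/
open Finset

private lemma lbc_finite_aux (D m : ℕ) : Finite {a : Fin D → ℕ // ∑ i, a i ≤ m} := by
  have hb : ∀ (a : {a : Fin D → ℕ // ∑ i, a i ≤ m}) (i : Fin D), a.1 i < m + 1 := by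
    intro a i
    have h := Finset.single_le_sum (f := a.1) (fun j _ => Nat.zero_le _) (Finset.mem_univ i)
    have h2 := a.2
    omega
  exact Finite.of_injective (fun a => (fun i => (⟨a.1 i, hb a i⟩ : Fin (m + 1))))
    (fun a b h => Subtype.ext (funext fun i => congrArg Fin.val (congrFun h i)))

private lemma lbc_card_sum_eq (D m : ℕ) :
    Nat.card {a : Fin D → ℕ // ∑ i, a i = m} = (D + m - 1).choose m := by
  have e : {a : Fin D → ℕ // ∑ i, a i = m} ≃ Sym (Fin D) m := by
    refine Equiv.subtypeEquiv
      ((Finsupp.equivFunOnFinite).symm.trans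
        (Multiset.toFinsupp (α := Fin D)).symm.toEquiv) ?_
    intro a
    have : Multiset.card (Multiset.toFinsupp.symm.toEquiv
        (Finsupp.equivFunOnFinite.symm a)) = ∑ i, a i := by
      simp [Multiset.toFinsupp_symm_apply, Finsupp.card_toMultiset,
        Finsupp.sum_fintype]
    simp only [Equiv.trans_apply]
    rw [this]
  rw [Nat.card_congr e, Nat.card_eq_fintype_card, Sym.card_sym_eq_choose]
  simp

private lemma lbc_card_sum_le (D m : ℕ) :
    Nat.card {a : Fin D → ℕ // ∑ i, a i ≤ m} = (m + D).choose D := by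
  have e : {a : Fin D → ℕ // ∑ i, a i ≤ m} ≃ {b : Fin (D + 1) → ℕ // ∑ i, b i = m} :=
    { toFun := fun a => ⟨Fin.cons (m - ∑ i, a.1 i) a.1, by
        have := a.2; rw [Fin.sum_cons]; omega⟩
      invFun := fun b => ⟨Fin.tail b.1, by
        have := b.2; rw [Fin.sum_univ_succ] at this
        show ∑ i : Fin D, b.1 (Fin.succ i) ≤ m
        omega⟩
      left_inv := fun a => Subtype.ext (by simp [Fin.tail_cons])
      right_inv := fun b => Subtype.ext (by
        have hb := b.2; rw [Fin.sum_univ_succ] at hb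
        show Fin.cons (m - ∑ i : Fin D, Fin.tail b.1 i) (Fin.tail b.1) = b.1
        have h0 : m - ∑ i : Fin D, Fin.tail b.1 i = b.1 0 := by
          show m - ∑ i : Fin D, b.1 (Fin.succ i) = b.1 0
          omega
        rw [h0, Fin.cons_self_tail]) }
  rw [Nat.card_congr e, lbc_card_sum_eq]
  have h1 : D + 1 + m - 1 = m + D := by omega
  rw [h1, ← Nat.choose_symm (Nat.le_add_right m D)]
  congr 1
  omega

private lemma lbc_card_fiber (D d c : ℕ) (hD : 1 ≤ D) :
    Nat.card {a : Fin D → ℕ // c + ∑ i, a i ≤ d} = (d + D - c).choose D := by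
  rcases le_or_gt c d with h | h
  · have e : {a : Fin D → ℕ // c + ∑ i, a i ≤ d} ≃ {a : Fin D → ℕ // ∑ i, a i ≤ d - c} :=
      Equiv.subtypeEquiv (Equiv.refl _) (by intro a; simp only [Equiv.refl_apply]; omega)
    rw [Nat.card_congr e, lbc_card_sum_le]
    congr 1; omega
  · have he : IsEmpty {a : Fin D → ℕ // c + ∑ i, a i ≤ d} :=
      ⟨fun a => by have := a.2; omega⟩
    rw [Nat.card_of_isEmpty]
    symm
    exact Nat.choose_eq_zero_of_lt (by omega)

/-- For integers `D ≥ 1` and `d ≥ 0`, the number of lattice points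
`z ∈ ℤ^D` with `‖z‖₁ ≤ d` equals `∑_{k=0}^{D} C(D,k)·C(d+D-k, D)`. -/
theorem lattice_ball_count (D d : ℕ) (hD : 1 ≤ D) :
    Nat.card {z : Fin D → ℤ // ∑ i, (z i).natAbs ≤ d} =
      ∑ k ∈ Finset.range (D + 1), D.choose k * (d + D - k).choose D := by
  classical
  have e : {z : Fin D → ℤ // ∑ i, (z i).natAbs ≤ d} ≃
      Σ S : Finset (Fin D), {a : Fin D → ℕ // S.card + ∑ i, a i ≤ d} :=
    { toFun := fun z =>
        ⟨univ.filter (fun i => z.1 i < 0),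
         ⟨fun i => if z.1 i < 0 then (z.1 i).natAbs - 1 else (z.1 i).natAbs, by
          have hz := z.2
          simp only [Finset.card_filter, ← Finset.sum_add_distrib]
          calc ∑ i, ((if z.1 i < 0 then 1 else 0) +
                (if z.1 i < 0 then (z.1 i).natAbs - 1 else (z.1 i).natAbs))
              = ∑ i, (z.1 i).natAbs := by
                refine Finset.sum_congr rfl fun i _ => ?_
                split_ifs with h <;> omega
            _ ≤ d := hz⟩⟩
      invFun := fun p =>
        ⟨fun i => if i ∈ p.1 then -((p.2.1 i : ℤ) + 1) else (p.2.1 i : ℤ), by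
          have hp := p.2.2
          calc ∑ i, (if i ∈ p.1 then -((p.2.1 i : ℤ) + 1) else (p.2.1 i : ℤ)).natAbs
              = ∑ i, ((if i ∈ p.1 then 1 else 0) + p.2.1 i) := by
                refine Finset.sum_congr rfl fun i _ => ?_
                split_ifs with h
                · simp; omega
                · simp
            _ = p.1.card + ∑ i, p.2.1 i := by
                rw [Finset.sum_add_distrib, ← Finset.card_filter]
                simp [Finset.filter_mem_eq_inter]
            _ ≤ d := hp⟩
      left_inv := fun z => Subtype.ext (funext fun i => by
        simp only [Finset.mem_filter, Finset.mem_univ, true_and]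
        split_ifs with h <;> omega)
      right_inv := fun p => by
        refine Sigma.subtype_ext ?_ ?_
        · ext i
          simp only [Finset.mem_filter, Finset.mem_univ, true_and]
          constructor
          · intro hi
            by_contra hmem
            simp only [if_neg hmem] at hi
            omega
          · intro hi
            simp only [if_pos hi]
            omega
        · funext i
          by_cases hi : i ∈ p.1
          · simp only [if_pos hi]
            split_ifs with h <;> omega
          · simp only [if_neg hi]
            split_ifs with h <;> omega }
  have hfin : ∀ S : Finset (Fin D), Finite {a : Fin D → ℕ // S.card + ∑ i, a i ≤ d} := by
    intro S
    have := lbc_finite_aux D d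
    exact Finite.of_injective
      (fun a => (⟨a.1, by have := a.2; omega⟩ : {a : Fin D → ℕ // ∑ i, a i ≤ d}))
      (fun a b h => by
        apply Subtype.ext
        have := congrArg Subtype.val h
        simpa using this)
  letI : ∀ S : Finset (Fin D), Fintype {a : Fin D → ℕ // S.card + ∑ i, a i ≤ d} :=
    fun S => Fintype.ofFinite _
  rw [Nat.card_congr e, Nat.card_eq_fintype_card, Fintype.card_sigma]
  have hcard : ∀ S : Finset (Fin D),
      Fintype.card {a : Fin D → ℕ // S.card + ∑ i, a i ≤ d} = (d + D - S.card).choose D := by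
    intro S
    rw [← Nat.card_eq_fintype_card]
    exact lbc_card_fiber D d S.card hD
  simp_rw [hcard]
  rw [← Finset.powerset_univ, Finset.sum_powerset_apply_card
    (fun m => (d + D - m).choose D) (x := (univ : Finset (Fin D)))]
  simp [Finset.card_univ]
end

section
/- Let B ∈ ℂ^{n×n} satisfy |B_{ij}| ≤ C·q^{d(i,j)} for constants C > 0, 0 ≤ q < 1, where d is the geodesic distance of a graph G on {1,...,n}, and suppose all level sets satisfy |L^(δ)(j)| ≤ K·δ^α for δ ≥ 1, with K, α > 0. Define B^(m) by B^(m)_{ij} = B_{ij} if d(i,j) ≤ m and 0 otherwise. Then ‖B - B^(m)‖₁ ≤ C·K·∑_{δ=m+1}^∞ δ^α q^δ, and in particular ‖B - B^(m)‖₁ → 0 as m → ∞, with the bound independent of n. -/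
open Filter in
lemma sparse_aux_summable (q α : ℝ) (hq0 : 0 ≤ q) (hq1 : q < 1) (hα : 0 < α) :
    Summable (fun δ : ℕ => (δ : ℝ) ^ α * q ^ δ) := by
  have hg : Summable (fun δ : ℕ => (δ : ℝ) ^ (⌈α⌉₊) * q ^ δ) :=
    summable_pow_mul_geometric_of_norm_lt_one _
      (by rwa [Real.norm_eq_abs, abs_of_nonneg hq0])
  refine hg.of_nonneg_of_le (fun δ => by positivity) (fun δ => ?_)
  rcases Nat.eq_zero_or_pos δ with h | h
  · subst h
    simp [Real.zero_rpow hα.ne']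
  · have h1 : (1:ℝ) ≤ (δ : ℝ) := by exact_mod_cast h
    have : (δ:ℝ) ^ α ≤ (δ:ℝ) ^ (⌈α⌉₊ : ℕ) := by
      calc (δ:ℝ) ^ α ≤ (δ:ℝ) ^ ((⌈α⌉₊ : ℕ) : ℝ) :=
            Real.rpow_le_rpow_of_exponent_le h1 (Nat.le_ceil α)
        _ = (δ:ℝ) ^ (⌈α⌉₊ : ℕ) := Real.rpow_natCast _ _
    have hqδ : (0:ℝ) ≤ q ^ δ := by positivity
    exact mul_le_mul_of_nonneg_right this hqδ

open Filter in
/-- Let `B ∈ ℂ^{n×n}` satisfy `|B_{ij}| ≤ C·q^{d(i,j)}` (`C > 0`,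
`0 ≤ q < 1`, `d` the geodesic distance of a graph `G` on the index set; the
hypothesis is phrased so that it holds for every finite `s ≤ d(i,j)`, which for
`q < 1` is equivalent and also covers `d(i,j) = ∞`). Assume all level sets
satisfy `|L^(δ)(j)| ≤ K·δ^α` for `δ ≥ 1`. With `B^(m)` the truncation keeping
entries at distance `≤ m`, every column sum of `|B - B^(m)|` is bounded by
`C·K·∑_{δ=m+1}^∞ δ^α q^δ`, a bound independent of `n` which tends to `0`
as `m → ∞`. -/
theorem sparse_approx_column_bound (n : ℕ) (B : Matrix (Fin n) (Fin n) ℂ)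
    (G : SimpleGraph (Fin n)) (C q K α : ℝ)
    (hC : 0 < C) (hq0 : 0 ≤ q) (hq1 : q < 1) (hK : 0 < K) (hα : 0 < α)
    (hdecay : ∀ i j : Fin n, ∀ s : ℕ, (s : ℕ∞) ≤ G.edist i j →
      ‖B i j‖ ≤ C * q ^ s)
    (hlevel : ∀ (j : Fin n) (δ : ℕ), 1 ≤ δ →
      ((Finset.univ.filter (fun i : Fin n => G.edist i j = δ)).card : ℝ)
        ≤ K * (δ : ℝ) ^ α)
    (Bm : ℕ → Matrix (Fin n) (Fin n) ℂ)
    (hBm : ∀ (m : ℕ) (i j : Fin n),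
      Bm m i j = if G.edist i j ≤ (m : ℕ∞) then B i j else 0) :
    (∀ (m : ℕ) (j : Fin n), ∑ i, ‖B i j - Bm m i j‖ ≤
        C * K * ∑' δ : ℕ, ((m + 1 + δ : ℕ) : ℝ) ^ α * q ^ (m + 1 + δ)) ∧
      Tendsto (fun m : ℕ => C * K * ∑' δ : ℕ, ((m + 1 + δ : ℕ) : ℝ) ^ α * q ^ (m + 1 + δ))
        atTop (nhds 0) := by
  set f : ℕ → ℝ := fun δ => (δ : ℝ) ^ α * q ^ δ with hf
  have hfnonneg : ∀ δ, 0 ≤ f δ := fun δ => by positivity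
  have hsum : Summable f := sparse_aux_summable q α hq0 hq1 hα
  have hsum' : ∀ m : ℕ, Summable (fun δ : ℕ => f (m + 1 + δ)) := by
    intro m
    have h1 : Summable (fun δ : ℕ => f (δ + (m + 1))) :=
      (summable_nat_add_iff (m + 1)).2 hsum
    refine h1.congr fun δ => by rw [add_comm]
  -- edist bound: finite distances are < n
  have hdistlt : ∀ (i j : Fin n) (δ : ℕ), G.edist i j = (δ : ℕ∞) → δ < n := by
    intro i j δ hδ
    obtain ⟨p, hp⟩ := SimpleGraph.exists_walk_of_edist_eq_coe hδ
    have hb : G.edist i j ≤ (p.bypass.length : ℕ∞) := SimpleGraph.edist_le _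
    rw [hδ, Nat.cast_le] at hb
    calc δ ≤ p.bypass.length := hb
      _ < Fintype.card (Fin n) := p.bypass_isPath.length_lt
      _ = n := Fintype.card_fin n
  constructor
  · intro m j
    have step1 : ∑ i, ‖B i j - Bm m i j‖
        = ∑ i, (if (m : ℕ∞) < G.edist i j then ‖B i j‖ else 0) := by
      refine Finset.sum_congr rfl fun i _ => ?_
      rw [hBm]
      by_cases h : G.edist i j ≤ (m : ℕ∞)
      · simp [h, not_lt.2 h]
      · simp [h, not_le.1 h]
    -- pointwise bound by double-sum indicator
    have step2 : ∀ i : Fin n,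
        (if (m : ℕ∞) < G.edist i j then ‖B i j‖ else 0)
          ≤ ∑ δ ∈ Finset.Ico (m + 1) (m + 1 + n),
              (if G.edist i j = (δ : ℕ∞) then C * q ^ δ else 0) := by
      intro i
      have hRnonneg : (0:ℝ) ≤ ∑ δ ∈ Finset.Ico (m + 1) (m + 1 + n),
          (if G.edist i j = (δ : ℕ∞) then C * q ^ δ else 0) := by
        refine Finset.sum_nonneg fun δ _ => ?_
        split <;> positivity
      by_cases h : (m : ℕ∞) < G.edist i j
      · rw [if_pos h]
        rcases eq_or_ne (G.edist i j) ⊤ with htop | htop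
        · -- unreachable: |B i j| ≤ C q^s for all s, hence ≤ 0
          have hle : ‖B i j‖ ≤ 0 := by
            have hev : ∀ s : ℕ, ‖B i j‖ ≤ C * q ^ s := by
              intro s; exact hdecay i j s (htop ▸ le_top)
            have hten : Tendsto (fun s : ℕ => C * q ^ s) atTop (nhds 0) := by
              simpa using (tendsto_pow_atTop_nhds_zero_of_lt_one hq0 hq1).const_mul C
            exact ge_of_tendsto hten (Eventually.of_forall hev)
          exact hle.trans hRnonneg
        · obtain ⟨δ, hδ⟩ := WithTop.ne_top_iff_exists.1 htop
          have hδ' : G.edist i j = (δ : ℕ∞) := hδ.symm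
          have hδlt : δ < n := hdistlt i j δ hδ'
          have hδm : m + 1 ≤ δ := by
            rw [hδ'] at h
            exact_mod_cast Nat.add_one_le_iff.2 (by exact_mod_cast h)
          have hmem : δ ∈ Finset.Ico (m + 1) (m + 1 + n) :=
            Finset.mem_Ico.2 ⟨hδm, by omega⟩
          have hone : ‖B i j‖ ≤ C * q ^ δ :=
            hdecay i j δ (le_of_eq hδ'.symm)
          calc ‖B i j‖ ≤ C * q ^ δ := hone
            _ = if G.edist i j = (δ : ℕ∞) then C * q ^ δ else 0 := by rw [if_pos hδ']
            _ ≤ _ := by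
                refine Finset.single_le_sum (f := fun δ' : ℕ =>
                  if G.edist i j = (δ' : ℕ∞) then C * q ^ δ' else 0)
                  (fun δ' _ => ?_) hmem
                show 0 ≤ (if G.edist i j = (δ' : ℕ∞) then C * q ^ δ' else 0)
                split <;> positivity
      · rw [if_neg h]; exact hRnonneg
    -- sum the pointwise bound and swap order
    have step3 : ∑ i, (if (m : ℕ∞) < G.edist i j then ‖B i j‖ else 0)
        ≤ ∑ δ ∈ Finset.Ico (m + 1) (m + 1 + n),
            ((Finset.univ.filter (fun i : Fin n => G.edist i j = (δ : ℕ∞))).card : ℝ)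
              * (C * q ^ δ) := by
      calc ∑ i, (if (m : ℕ∞) < G.edist i j then ‖B i j‖ else 0)
          ≤ ∑ i, ∑ δ ∈ Finset.Ico (m + 1) (m + 1 + n),
              (if G.edist i j = (δ : ℕ∞) then C * q ^ δ else 0) :=
            Finset.sum_le_sum fun i _ => step2 i
        _ = ∑ δ ∈ Finset.Ico (m + 1) (m + 1 + n), ∑ i : Fin n,
              (if G.edist i j = (δ : ℕ∞) then C * q ^ δ else 0) := Finset.sum_comm
        _ = ∑ δ ∈ Finset.Ico (m + 1) (m + 1 + n),
              ((Finset.univ.filter (fun i : Fin n => G.edist i j = (δ : ℕ∞))).card : ℝ)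
                * (C * q ^ δ) := by
            refine Finset.sum_congr rfl fun δ _ => ?_
            rw [← Finset.sum_filter, Finset.sum_const, nsmul_eq_mul]
    have step4 : ∑ δ ∈ Finset.Ico (m + 1) (m + 1 + n),
            ((Finset.univ.filter (fun i : Fin n => G.edist i j = (δ : ℕ∞))).card : ℝ)
              * (C * q ^ δ)
        ≤ ∑ δ ∈ Finset.Ico (m + 1) (m + 1 + n), C * K * f δ := by
      refine Finset.sum_le_sum fun δ hδ => ?_
      have h1δ : 1 ≤ δ := le_trans (by omega) (Finset.mem_Ico.1 hδ).1
      have hcard := hlevel j δ h1δ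
      have hq : (0:ℝ) ≤ C * q ^ δ := by positivity
      calc ((Finset.univ.filter (fun i : Fin n => G.edist i j = (δ : ℕ∞))).card : ℝ)
            * (C * q ^ δ) ≤ (K * (δ : ℝ) ^ α) * (C * q ^ δ) :=
          mul_le_mul_of_nonneg_right hcard hq
        _ = C * K * f δ := by simp only [hf]; ring
    have step5 : ∑ δ ∈ Finset.Ico (m + 1) (m + 1 + n), C * K * f δ
        ≤ C * K * ∑' δ : ℕ, f (m + 1 + δ) := by
      rw [← Finset.mul_sum]
      refine mul_le_mul_of_nonneg_left ?_ (by positivity)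
      rw [Finset.sum_Ico_eq_sum_range]
      have hsub : m + 1 + n - (m + 1) = n := by omega
      rw [hsub]
      exact Summable.sum_le_tsum (Finset.range n) (fun δ _ => hfnonneg _) (hsum' m)
    calc ∑ i, ‖B i j - Bm m i j‖
        = ∑ i, (if (m : ℕ∞) < G.edist i j then ‖B i j‖ else 0) := step1
      _ ≤ _ := step3
      _ ≤ _ := step4
      _ ≤ C * K * ∑' δ : ℕ, f (m + 1 + δ) := step5
      _ = C * K * ∑' δ : ℕ, ((m + 1 + δ : ℕ) : ℝ) ^ α * q ^ (m + 1 + δ) := by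
          simp only [hf]
  · have h0 : Tendsto (fun i : ℕ => ∑' k : ℕ, f (k + i)) atTop (nhds 0) :=
      tendsto_sum_nat_add f
    have h1 : Tendsto (fun m : ℕ => ∑' k : ℕ, f (k + (m + 1))) atTop (nhds 0) :=
      h0.comp (tendsto_add_atTop_nat 1)
    have h2 : Tendsto (fun m : ℕ => ∑' k : ℕ, f (m + 1 + k)) atTop (nhds 0) := by
      refine h1.congr fun m => tsum_congr fun k => by rw [add_comm]
    have h3 := h2.const_mul (C * K)
    simpa only [mul_zero] using h3
end

section
/- Let t ≥ 1 and 0 < q < 1 with tq > 1, and let G_p be the full t-ary tree of height p with root j. Let B_p be the matrix with entries [B_p]_{ik} = q^{d(i,k)} where d is the tree graph distance, and B_p^(m) the truncation keeping entries with d(i,k) ≤ m. Then for all m < p, ‖B_p - B_p^(m)‖₁ ≥ (p - m)·(tq)^{m+1}. -/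
/-- Let `t ≥ 1`, `0 < q < 1` with `tq > 1`, let `G_p` be the full
`t`-ary tree of height `p` (modelled by its vertex set `Σ δ : Fin (p+1), Fin (t^δ)`:
`t^δ` nodes at each depth `δ ≤ p`), with root `r` and graph distance `dist`, so
that `dist i r` equals the depth of `i`. Let `[B_p]_{ik} = q^{dist i k}` and let
`B_p^(m)` be the truncation keeping entries with `dist ≤ m`. Then for `m < p`
the maximum-column-sum norm satisfies `‖B_p - B_p^(m)‖₁ ≥ (p-m)·(tq)^{m+1}`,
i.e. some column sum is at least `(p-m)·(tq)^{m+1}`. -/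
theorem tree_no_sparse_approx (t p m : ℕ) (q : ℝ)
    (ht : 1 ≤ t) (hq0 : 0 < q) (hq1 : q < 1) (htq : 1 < (t : ℝ) * q) (hm : m < p)
    (dist : ((δ : Fin (p + 1)) × Fin (t ^ (δ : ℕ))) →
      ((δ : Fin (p + 1)) × Fin (t ^ (δ : ℕ))) → ℕ)
    (hsymm : ∀ i k, dist i k = dist k i)
    (r : (δ : Fin (p + 1)) × Fin (t ^ (δ : ℕ))) (hr : (r.1 : ℕ) = 0)
    (hdepth : ∀ i, dist i r = (i.1 : ℕ))
    (B Bm : Matrix ((δ : Fin (p + 1)) × Fin (t ^ (δ : ℕ)))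
      ((δ : Fin (p + 1)) × Fin (t ^ (δ : ℕ))) ℝ)
    (hB : ∀ i k, B i k = q ^ dist i k)
    (hBm : ∀ i k, Bm i k = if dist i k ≤ m then B i k else 0) :
    ∃ j, ((p - m : ℕ) : ℝ) * ((t : ℝ) * q) ^ (m + 1) ≤ ∑ i, |B i j - Bm i j| := by
  refine ⟨r, ?_⟩
  have hterm : ∀ i : (δ : Fin (p + 1)) × Fin (t ^ (δ : ℕ)),
      |B i r - Bm i r| = if (i.1 : ℕ) ≤ m then 0 else ((q : ℝ)) ^ (i.1 : ℕ) := by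
    intro i
    rw [hBm, hB, hdepth]
    by_cases h : (i.1 : ℕ) ≤ m
    · simp [h]
    · simp [h, abs_of_nonneg (pow_nonneg hq0.le _)]
  have hcard : (Finset.univ.filter (fun δ : Fin (p + 1) => m < (δ : ℕ))).card = p - m := by
    rw [Finset.card_filter, Fin.sum_univ_eq_sum_range (fun j => if m < j then 1 else 0),
      ← Finset.card_filter]
    have : (Finset.range (p + 1)).filter (fun j => m < j) = Finset.Ico (m + 1) (p + 1) := by
      ext x; simp [Finset.mem_filter, Finset.mem_range, Finset.mem_Ico]; omega
    rw [this, Nat.card_Ico]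
    omega
  calc ((p - m : ℕ) : ℝ) * ((t : ℝ) * q) ^ (m + 1)
      ≤ ∑ δ : Fin (p + 1), (if (δ : ℕ) ≤ m then 0 else ((t : ℝ) * q) ^ (δ : ℕ)) := by
        have h1 : (∑ δ : Fin (p + 1), (if (δ : ℕ) ≤ m then 0 else ((t : ℝ) * q) ^ (δ : ℕ)))
            = ∑ δ ∈ Finset.univ.filter (fun δ : Fin (p + 1) => m < (δ : ℕ)),
                ((t : ℝ) * q) ^ (δ : ℕ) := by
          rw [Finset.sum_filter]
          refine Finset.sum_congr rfl fun δ _ => ?_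
          by_cases h : (δ : ℕ) ≤ m <;> simp [h, not_lt.mpr, lt_of_not_ge]
        rw [h1, ← hcard]
        have := Finset.card_nsmul_le_sum
          (Finset.univ.filter (fun δ : Fin (p + 1) => m < (δ : ℕ)))
          (fun δ => ((t : ℝ) * q) ^ (δ : ℕ)) (((t : ℝ) * q) ^ (m + 1))
          (fun δ hδ => by
            have hδ' : m + 1 ≤ (δ : ℕ) := (Finset.mem_filter.mp hδ).2
            exact pow_le_pow_right₀ htq.le hδ')
        simpa [nsmul_eq_mul] using this
      _ = ∑ i : (δ : Fin (p + 1)) × Fin (t ^ (δ : ℕ)), |B i r - Bm i r| := by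
        rw [show (Finset.univ : Finset ((δ : Fin (p + 1)) × Fin (t ^ (δ : ℕ)))) =
          Finset.univ.sigma fun _ => Finset.univ from Finset.univ_sigma_univ.symm,
          Finset.sum_sigma]
        refine Finset.sum_congr rfl fun δ _ => ?_
        rw [Finset.sum_congr rfl fun x _ => hterm ⟨δ, x⟩]
        simp only [Finset.sum_const, Finset.card_univ, Fintype.card_fin, nsmul_eq_mul]
        by_cases h : (δ : ℕ) ≤ m
        · simp [h]
        · simp only [h, if_false, mul_pow]
          push_cast
          ring
end

section
/- Let f(A) satisfy the exponential decay bound |[f(A)]_{ij}| ≤ C·q^{d(i,j)} with C > 0, 0 ≤ q < 1, where d is the geodesic distance in G(A), and let d̄ be the distance in the undirected graph |G(A)|. Let V₁,...,V_m be the color classes of a distance-2d coloring of |G(A)|, v_ℓ = ∑_{i∈V_ℓ} e_i, and define f(A)^[d] by [f(A)^[d]]_{ij} = [f(A)v_ℓ]_i if d̄(i,j) ≤ d (where j ∈ V_ℓ) and 0 if d̄(i,j) > d. Then with ε = C·q^d, for all i, j: |[f(A)]_{ij} - [f(A)^[d]]_{ij}| ≤ (|V_ℓ| - 1)·ε when d̄(i,j)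 ≤ d (j ∈ V_ℓ), and ≤ ε when d̄(i,j) > d. -/
/-- Proposition: entrywise probing error bound. Let `F = f(A)`
have exponential decay `|F_{ij}| ≤ C·q^{dd(i,j)}` where `dd` is the geodesic
distance in the directed graph `G(A)` (the decay hypothesis is phrased for every
finite `s ≤ dd(i,j)`, equivalent for `q < 1` and covering `dd = ∞`); `G` is the
underlying undirected graph `|G(A)|` with distance `d̄ = G.edist ≤ dd`. Let the
color classes of a distance-`2d` coloring of `|G(A)|` be the fibers of `col`,
and let `F^[d]` be the probing approximation: `[F^[d]]_{ij} = [F v_ℓ]_i` when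
`d̄(i,j) ≤ d` (with `j ∈ V_ℓ`), and `0` when `d̄(i,j) > d`. Then with
`ε = C·q^d`: `|F_{ij} - [F^[d]]_{ij}| ≤ (|V_ℓ|-1)·ε` if `d̄(i,j) ≤ d`
(`j ∈ V_ℓ`), and `≤ ε` if `d̄(i,j) > d`. -/
theorem probing_entrywise_error (n m d : ℕ) (A F : Matrix (Fin n) (Fin n) ℂ)
    (C q : ℝ) (hC : 0 < C) (hq0 : 0 ≤ q) (hq1 : q < 1)
    (G : SimpleGraph (Fin n))
    (hG : ∀ i j : Fin n, G.Adj i j ↔ i ≠ j ∧ (A i j ≠ 0 ∨ A j i ≠ 0))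
    (dd : Fin n → Fin n → ℕ∞) (hdd : ∀ i j : Fin n, G.edist i j ≤ dd i j)
    (hdecay : ∀ i j : Fin n, ∀ s : ℕ, (s : ℕ∞) ≤ dd i j →
      ‖F i j‖ ≤ C * q ^ s)
    (col : Fin n → Fin m)
    (hcolor : ∀ i j : Fin n, i ≠ j → col i = col j → (2 * d : ℕ) < G.edist i j)
    (Fd : Matrix (Fin n) (Fin n) ℂ)
    (hFd : ∀ i j : Fin n, Fd i j =
      if G.edist i j ≤ (d : ℕ∞) then
        ∑ k ∈ Finset.univ.filter (fun k => col k = col j), F i k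
      else 0) :
    ∀ i j : Fin n,
      (G.edist i j ≤ (d : ℕ∞) →
        ‖F i j - Fd i j‖ ≤
          (((Finset.univ.filter (fun k => col k = col j)).card - 1 : ℕ) : ℝ) *
            (C * q ^ d)) ∧
      ((d : ℕ∞) < G.edist i j →
        ‖F i j - Fd i j‖ ≤ C * q ^ d) := by
  intro i j
  have hε : (0:ℝ) ≤ C * q ^ d := by positivity
  constructor
  · intro hle
    set S := Finset.univ.filter (fun k => col k = col j) with hS
    have hj : j ∈ S := by simp [hS]
    rw [hFd, if_pos hle, ← Finset.add_sum_erase _ _ hj]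
    have heq : F i j - (F i j + ∑ k ∈ S.erase j, F i k) = -(∑ k ∈ S.erase j, F i k) := by
      ring
    rw [heq, norm_neg]
    have hbound : ∀ k ∈ S.erase j, ‖F i k‖ ≤ C * q ^ d := by
      intro k hk
      have hkj : k ≠ j := (Finset.mem_erase.mp hk).1
      have hck : col k = col j := by
        have := (Finset.mem_erase.mp hk).2
        simpa [hS] using this
      have h2d : ((2 * d : ℕ) : ℕ∞) < G.edist k j := hcolor k j hkj hck
      have hik : (d : ℕ∞) < G.edist i k := by
        by_contra h
        push_neg at h
        have htri : G.edist k j ≤ G.edist k i + G.edist i j := G.edist_triangle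
        have : G.edist k j ≤ (d : ℕ∞) + (d : ℕ∞) := by
          calc G.edist k j ≤ G.edist k i + G.edist i j := htri
            _ ≤ (d : ℕ∞) + (d : ℕ∞) := by
                exact add_le_add (by rwa [G.edist_comm]) hle
        have : G.edist k j ≤ ((2 * d : ℕ) : ℕ∞) := by
          refine this.trans_eq ?_
          push_cast
          ring
        exact absurd (h2d.trans_le this) (lt_irrefl _)
      exact hdecay i k d (le_trans hik.le (hdd i k))
    calc ‖∑ k ∈ S.erase j, F i k‖
        ≤ ∑ k ∈ S.erase j, ‖F i k‖ := by
          exact norm_sum_le _ _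
      _ ≤ (S.erase j).card • (C * q ^ d) := Finset.sum_le_card_nsmul _ _ _ hbound
      _ = ((S.card - 1 : ℕ) : ℝ) * (C * q ^ d) := by
          rw [Finset.card_erase_of_mem hj, nsmul_eq_mul]
  · intro hlt
    rw [hFd, if_neg (not_le.mpr hlt), sub_zero]
    exact hdecay i j d (le_trans hlt.le (hdd i j))
end

section
/- Let A ∈ ℂ^{n×n} be β-banded, suppose |[f(A)]_{ij}| ≤ C q^{d(i,j)} with 0 < q < 1, and let f(A)^[d] be the probing approximation built from the banded coloring col(i) = ((i-1) mod (2dβ+1)) + 1 (a distance-2d coloring). Then ‖f(A) - f(A)^[d]‖₁ ≤ 2βq·(2 + 2dβ)/(1-q) · C q^d. -/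
/-- Fiber counting: if `t` is at-most-2-to-1 (distinguished by side of `j`) and positive on `T`,
then each fiber of `k ↦ ⌈t k / β⌉` has at most `2β` elements. -/
lemma probing_aux_fiber {n β : ℕ} (hβ : 1 ≤ β) (j : Fin n) (T : Finset (Fin n))
    (t ℓ : Fin n → ℕ) (hℓ : ∀ k, ℓ k = (t k + β - 1) / β)
    (hpos : ∀ k ∈ T, 1 ≤ t k)
    (hinj : ∀ k ∈ T, ∀ k' ∈ T, t k = t k' →
      (((j : ℕ) < (k : ℕ)) ↔ ((j : ℕ) < (k' : ℕ))) → k = k')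
    (m : ℕ) :
    (T.filter fun k => ℓ k = m).card ≤ 2 * β := by
  have hβ0 : 0 < β := hβ
  have htarget : ((Finset.range β) ×ˢ (Finset.univ : Finset Bool)).card = 2 * β := by
    simp [Finset.card_product, mul_comm]
  rw [← htarget]
  apply Finset.card_le_card_of_injOn (fun k => ((t k - 1) % β, decide ((j : ℕ) < (k : ℕ))))
  · intro k _
    simp only [Finset.mem_coe, Finset.mem_product, Finset.mem_range, Finset.mem_univ, and_true]
    exact Nat.mod_lt _ hβ0
  · intro k hk k' hk' heq
    simp only [Finset.coe_filter, Set.mem_setOf_eq] at hk hk'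
    obtain ⟨hkT, hkm⟩ := hk
    obtain ⟨hk'T, hk'm⟩ := hk'
    have e1 : (t k - 1) % β = (t k' - 1) % β := (Prod.ext_iff.mp heq).1
    have e2 : ((j : ℕ) < (k : ℕ)) ↔ ((j : ℕ) < (k' : ℕ)) := by
      have := (Prod.ext_iff.mp heq).2
      simpa [decide_eq_decide] using this
    obtain ⟨P, hP⟩ : ∃ P, P = m * β := ⟨_, rfl⟩
    have bdd : ∀ x ∈ T, ℓ x = m → P ≤ t x + β - 1 ∧ t x + β - 1 < P + β := by
      intro x hxT hxm
      constructor
      · rw [hP, ← hxm, hℓ x]; exact Nat.div_mul_le_self _ _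
      · have h1 : (t x + β - 1) / β < m + 1 := by rw [← hℓ x]; omega
        have h2 := (Nat.div_lt_iff_lt_mul hβ0).mp h1
        have h3 : (m + 1) * β = P + β := by rw [hP]; ring
        omega
    obtain ⟨b1, b2⟩ := bdd k hkT hkm
    obtain ⟨b1', b2'⟩ := bdd k' hk'T hk'm
    have hp := hpos k hkT
    have hp' := hpos k' hk'T
    have htt : t k = t k' := by
      rcases le_total (t k - 1) (t k' - 1) with hle | hle
      · have hdvd : β ∣ (t k' - 1) - (t k - 1) := (Nat.modEq_iff_dvd' hle).mp e1
        have := Nat.eq_zero_of_dvd_of_lt hdvd (by omega)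
        omega
      · have hdvd : β ∣ (t k - 1) - (t k' - 1) := (Nat.modEq_iff_dvd' hle).mp e1.symm
        have := Nat.eq_zero_of_dvd_of_lt hdvd (by omega)
        omega
    exact hinj k hkT k' hk'T htt e2

/-- Corollary: 1-norm probing bound for banded matrices. Let
`A ∈ ℂ^{n×n}` be `β`-banded, let `F = f(A)` satisfy the decay
`|F_{ij}| ≤ C·q^{dd(i,j)}` (`0 < q < 1`) w.r.t. the geodesic distance `dd` of
`G(A)` (which dominates the undirected distance `G.edist`), and let `F^[d]` be
the probing approximation built from the banded distance-`2d` coloring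
`col(i) = ((i-1) mod (2dβ+1)) + 1` (0-based: `i mod (2dβ+1)`). Then
`‖F - F^[d]‖₁ ≤ 2βq·(2+2dβ)/(1-q) · C·q^d`, i.e. every column sum of
`|F - F^[d]|` is bounded by this quantity. -/
theorem probing_banded_one_norm (n β d : ℕ) (hβ : 1 ≤ β)
    (A F : Matrix (Fin n) (Fin n) ℂ) (C q : ℝ)
    (hC : 0 < C) (hq0 : 0 < q) (hq1 : q < 1)
    (hband : ∀ i j : Fin n, (β : ℤ) < |(i : ℤ) - (j : ℤ)| → A i j = 0)
    (G : SimpleGraph (Fin n))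
    (hG : ∀ i j : Fin n, G.Adj i j ↔ i ≠ j ∧ (A i j ≠ 0 ∨ A j i ≠ 0))
    (dd : Fin n → Fin n → ℕ∞) (hdd : ∀ i j : Fin n, G.edist i j ≤ dd i j)
    (hdecay : ∀ i j : Fin n, ∀ s : ℕ, (s : ℕ∞) ≤ dd i j →
      ‖F i j‖ ≤ C * q ^ s)
    (col : Fin n → ℕ) (hcol : ∀ i : Fin n, col i = (i : ℕ) % (2 * d * β + 1))
    (Fd : Matrix (Fin n) (Fin n) ℂ)
    (hFd : ∀ i j : Fin n, Fd i j =
      if G.edist i j ≤ (d : ℕ∞) then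
        ∑ k ∈ Finset.univ.filter (fun k => col k = col j), F i k
      else 0) :
    ∀ j : Fin n, ∑ i, ‖F i j - Fd i j‖ ≤
      2 * (β : ℝ) * q * (2 + 2 * (d : ℝ) * (β : ℝ)) / (1 - q) * (C * q ^ d) := by
  intro j
  have hβ0 : 0 < β := hβ
  have hq0' : (0 : ℝ) ≤ q := hq0.le
  have h1q : (0 : ℝ) < 1 - q := by linarith
  set M : ℕ := 2 * d * β + 1 with hM
  set w : ℕ := d * β with hw
  set K : ℝ := 2 * (β : ℝ) * C * q ^ (d + 1) * (1 - q)⁻¹ with hK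
  have hKpos : 0 < K := by
    rw [hK]; positivity
  -- adjacency implies index distance at most β
  have hAdj : ∀ u v : Fin n, G.Adj u v → ((u : ℤ) - (v : ℤ)).natAbs ≤ β := by
    intro u v huv
    by_contra hc
    obtain ⟨hne, h0⟩ := (hG u v).mp huv
    have hlt : (β : ℤ) < |(u : ℤ) - (v : ℤ)| := by
      rw [Int.abs_eq_natAbs]; omega
    have hlt' : (β : ℤ) < |(v : ℤ) - (u : ℤ)| := by
      rw [Int.abs_eq_natAbs]; omega
    rcases h0 with h0 | h0
    · exact h0 (hband u v hlt)
    · exact h0 (hband v u hlt')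
  -- walks move by at most β per step
  have hwalk : ∀ (u v : Fin n) (p : G.Walk u v), ((u : ℤ) - (v : ℤ)).natAbs ≤ p.length * β := by
    intro u v p
    induction p with
    | nil => simp
    | cons h p ih =>
      rename_i a b c
      have h1 := hAdj _ _ h
      simp only [SimpleGraph.Walk.length_cons, Nat.succ_mul]
      omega
  have hedist : ∀ (u v : Fin n) (s : ℕ), G.edist u v ≤ (s : ℕ∞) →
      ((u : ℤ) - (v : ℤ)).natAbs ≤ s * β := by
    intro u v s h
    have hne : G.edist u v ≠ ⊤ := ne_top_of_le_ne_top (by simp) h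
    obtain ⟨p, hp⟩ := SimpleGraph.exists_walk_of_edist_ne_top hne
    have hlen : p.length ≤ s := by exact_mod_cast hp.le.trans h
    exact (hwalk u v p).trans (Nat.mul_le_mul_right _ hlen)
  -- decay via index distance
  have hdecay' : ∀ (u v : Fin n) (s : ℕ), s * β < ((u : ℤ) - (v : ℤ)).natAbs →
      ‖F u v‖ ≤ C * q ^ (s + 1) := by
    intro u v s hlt
    apply hdecay
    refine le_trans ?_ (hdd u v)
    have hnle : ¬ G.edist u v ≤ (s : ℕ∞) := fun hc => absurd (hedist u v s hc) (by omega)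
    have := Order.add_one_le_of_lt (not_le.mp hnle)
    exact_mod_cast this
  set D : Fin n → ℕ := fun i => ((i : ℤ) - (j : ℤ)).natAbs with hD
  have hDn : ∀ i : Fin n, D i ≤ n := by
    intro i
    have h1 := i.isLt
    have h2 := j.isLt
    simp only [hD]
    omega
  have hside : ∀ k k' : Fin n, D k = D k' →
      (((j : ℕ) < (k : ℕ)) ↔ ((j : ℕ) < (k' : ℕ))) → k = k' := by
    intro k k' h1 h2
    simp only [hD] at h1
    apply Fin.ext
    omega
  have hceil_le : ∀ a : ℕ, 1 ≤ a → (a + β - 1) / β ≤ a := by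
    intro a ha
    apply Nat.le_of_lt_succ
    apply (Nat.div_lt_iff_lt_mul hβ0).mpr
    have h1 : a ≤ a * β := Nat.le_mul_of_pos_right a hβ0
    have h2 : a.succ * β = a * β + β := Nat.succ_mul a β
    omega
  have hgeom : ∀ N : ℕ, ∑ i ∈ Finset.range N, q ^ i ≤ (1 - q)⁻¹ := by
    intro N
    refine le_trans (Summable.sum_le_tsum (Finset.range N) (fun i _ => pow_nonneg hq0' i)
      (summable_geometric_of_lt_one hq0' hq1)) ?_
    rw [tsum_geometric_of_lt_one hq0' hq1]
  -- generic geometric fiber bound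
  have hgeo : ∀ (T : Finset (Fin n)) (ℓ : Fin n → ℕ),
      (∀ k ∈ T, 1 ≤ ℓ k ∧ ℓ k ≤ n) →
      (∀ m, 1 ≤ m → (T.filter fun k => ℓ k = m).card ≤ 2 * β) →
      ∑ k ∈ T, C * q ^ (d + ℓ k) ≤ K := by
    intro T ℓ hrange hfib
    have hmap : ∀ k ∈ T, ℓ k ∈ Finset.Ico 1 (n + 1) := by
      intro k hk
      have := hrange k hk
      simp only [Finset.mem_Ico]
      omega
    calc ∑ k ∈ T, C * q ^ (d + ℓ k)
        = ∑ m ∈ Finset.Ico 1 (n + 1), ∑ k ∈ T.filter (fun k => ℓ k = m), C * q ^ (d + ℓ k) :=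
          (Finset.sum_fiberwise_of_maps_to hmap _).symm
      _ ≤ ∑ m ∈ Finset.Ico 1 (n + 1), (2 * (β : ℝ)) * (C * q ^ (d + m)) := by
          apply Finset.sum_le_sum
          intro m hm
          have hm1 : 1 ≤ m := (Finset.mem_Ico.mp hm).1
          have hre : ∑ k ∈ T.filter (fun k => ℓ k = m), C * q ^ (d + ℓ k)
              = ∑ _k ∈ T.filter (fun k => ℓ k = m), C * q ^ (d + m) := by
            apply Finset.sum_congr rfl
            intro k hk
            rw [(Finset.mem_filter.mp hk).2]
          rw [hre, Finset.sum_const, nsmul_eq_mul]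
          have hcard := hfib m hm1
          have hterm : (0 : ℝ) ≤ C * q ^ (d + m) := by positivity
          have : ((T.filter fun k => ℓ k = m).card : ℝ) ≤ 2 * (β : ℝ) := by
            exact_mod_cast hcard
          exact mul_le_mul_of_nonneg_right this hterm
      _ = (2 * (β : ℝ) * C * q ^ d) * ∑ m ∈ Finset.Ico 1 (n + 1), q ^ m := by
          rw [Finset.mul_sum]
          apply Finset.sum_congr rfl
          intro m _
          rw [pow_add]
          ring
      _ ≤ (2 * (β : ℝ) * C * q ^ d) * (q * (1 - q)⁻¹) := by
          apply mul_le_mul_of_nonneg_left _ (by positivity)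
          rw [Finset.sum_Ico_eq_sum_range]
          simp only [Nat.add_sub_cancel]
          have : ∑ i ∈ Finset.range n, q ^ (1 + i) = q * ∑ i ∈ Finset.range n, q ^ i := by
            rw [Finset.mul_sum]
            apply Finset.sum_congr rfl
            intro i _
            rw [pow_add, pow_one]
          rw [this]
          exact mul_le_mul_of_nonneg_left (hgeom n) hq0'
      _ = K := by rw [hK]; ring
  -- the color class of j with j removed
  set T : Finset (Fin n) := (Finset.univ.filter (fun k => col k = col j)).erase j with hT
  have hjmem : j ∈ Finset.univ.filter (fun k => col k = col j) := by simp
  set tf : Fin n → ℕ := fun k => D k / M with htf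
  set ℓA : Fin n → ℕ := fun k => (tf k + β - 1) / β with hℓA
  have hTfact : ∀ k ∈ T, 1 ≤ tf k ∧ D k = tf k * M := by
    intro k hk
    obtain ⟨hkj, hkf⟩ := Finset.mem_erase.mp hk
    have hcolk : (k : ℕ) % M = (j : ℕ) % M := by
      have h1 := (Finset.mem_filter.mp hkf).2
      rw [hcol k, hcol j] at h1
      exact h1
    have hdvdZ : (M : ℤ) ∣ ((k : ℤ) - (j : ℤ)) := by
      have h1 : ((k : ℕ) : ℤ) % (M : ℤ) = ((j : ℕ) : ℤ) % (M : ℤ) := by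
        exact_mod_cast congrArg (fun x : ℕ => (x : ℤ)) hcolk
      exact Int.ModEq.dvd (Int.ModEq.symm h1)
    have hdvd : M ∣ D k := by
      have h2 := Int.natAbs_dvd_natAbs.mpr hdvdZ
      simpa [hD] using h2
    have hDk1 : 1 ≤ D k := by
      have hne : (k : ℕ) ≠ (j : ℕ) := fun h => hkj (Fin.ext h)
      simp only [hD]
      omega
    have hM1 : 1 ≤ M := by omega
    constructor
    · have := Nat.div_mul_cancel hdvd
      simp only [htf]
      rcases Nat.eq_zero_or_pos (D k / M) with h | h
      · rw [h] at this; omega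
      · exact h
    · exact (Nat.div_mul_cancel hdvd).symm
  -- near column bound
  have hnearbound : ∀ i : Fin n, G.edist i j ≤ (d : ℕ∞) →
      ‖F i j - Fd i j‖ ≤ K := by
    intro i hnear
    have hDi : D i ≤ w := by
      have h1 := hedist i j d hnear
      rw [hw]
      simpa [hD] using h1
    rw [hFd i j, if_pos hnear]
    have hsplit : ∑ k ∈ Finset.univ.filter (fun k => col k = col j), F i k
        = ∑ k ∈ T, F i k + F i j := (Finset.sum_erase_add _ _ hjmem).symm
    rw [hsplit]
    have hneg : F i j - (∑ k ∈ T, F i k + F i j) = -∑ k ∈ T, F i k := by ring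
    rw [hneg, norm_neg]
    refine le_trans (norm_sum_le _ _) ?_
    refine le_trans (Finset.sum_le_sum ?_) (hgeo T ℓA ?_ ?_)
    · -- pointwise decay bound
      intro k hk
      obtain ⟨ht1, hDt⟩ := hTfact k hk
      have hℓ1 : 1 ≤ ℓA k := by
        simp only [hℓA]
        rw [Nat.le_div_iff_mul_le hβ0]
        omega
      obtain ⟨l1, hl1⟩ : ∃ l1, ℓA k = l1 + 1 := ⟨ℓA k - 1, by omega⟩
      have hlb : l1 * β < tf k := by
        have hb1 : ℓA k * β ≤ tf k + β - 1 := by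
          simp only [hℓA]
          exact Nat.div_mul_le_self _ _
        have he : ℓA k * β = l1 * β + β := by rw [hl1]; ring
        omega
      have key2 : (d + l1) * β + w < tf k * M := by
        have h5 : 2 * w ≤ 2 * w * tf k := Nat.le_mul_of_pos_right _ ht1
        have he1 : (d + l1) * β + w = 2 * w + l1 * β := by rw [hw]; ring
        have he2 : tf k * M = 2 * w * tf k + tf k := by rw [hM, hw]; ring
        omega
      have tri : D k ≤ ((i : ℤ) - (k : ℤ)).natAbs + D i := by
        simp only [hD]
        omega
      have hik : (d + l1) * β < ((i : ℤ) - (k : ℤ)).natAbs := by omega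
      have := hdecay' i k (d + l1) hik
      have hexp : d + l1 + 1 = d + ℓA k := by omega
      rwa [hexp] at this
    · -- range of ℓA
      intro k hk
      obtain ⟨ht1, hDt⟩ := hTfact k hk
      have hℓ1 : 1 ≤ ℓA k := by
        simp only [hℓA]
        rw [Nat.le_div_iff_mul_le hβ0]
        omega
      have h2 : ℓA k ≤ tf k := hceil_le _ ht1
      have h3 : tf k ≤ D k := by
        have hM1 : 1 ≤ M := by omega
        have := Nat.le_mul_of_pos_right (tf k) (show 0 < M by omega)
        omega
      exact ⟨hℓ1, h2.trans (h3.trans (hDn k))⟩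
    · -- fibers
      intro m _
      apply probing_aux_fiber hβ j T tf ℓA (fun k => rfl)
        (fun k hk => (hTfact k hk).1)
      intro k hk k' hk' htt hss
      apply hside k k' _ hss
      rw [(hTfact k hk).2, (hTfact k' hk').2, htt]
  -- split the column sum
  have hsplit := Finset.sum_filter_add_sum_filter_not Finset.univ (fun i => D i ≤ w)
    (fun i => ‖F i j - Fd i j‖)
  rw [← hsplit]
  -- near part
  have hA : ∑ i ∈ Finset.univ.filter (fun i => D i ≤ w), ‖F i j - Fd i j‖
      ≤ (2 * w + 1 : ℕ) * K := by
    have hcard : (Finset.univ.filter (fun i : Fin n => D i ≤ w)).card ≤ 2 * w + 1 := by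
      have h1 : (Finset.univ.filter (fun i : Fin n => D i ≤ w)).card
          ≤ (Finset.Icc ((j : ℕ) - w) ((j : ℕ) + w)).card := by
        refine Finset.card_le_card_of_injOn (fun i => (i : ℕ)) ?_ (fun a _ b _ h => Fin.ext h)
        intro i hi
        have := (Finset.mem_filter.mp hi).2
        simp only [hD] at this
        simp only [Finset.mem_coe, Finset.mem_Icc]
        omega
      rw [Nat.card_Icc] at h1
      omega
    have hterm : ∀ i ∈ Finset.univ.filter (fun i : Fin n => D i ≤ w),
        ‖F i j - Fd i j‖ ≤ K := by
      intro i _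
      by_cases hnear : G.edist i j ≤ (d : ℕ∞)
      · exact hnearbound i hnear
      · rw [hFd i j, if_neg hnear, sub_zero]
        have h1 : ((d + 1 : ℕ) : ℕ∞) ≤ dd i j := by
          refine le_trans ?_ (hdd i j)
          have := Order.add_one_le_of_lt (not_le.mp hnear)
          exact_mod_cast this
        have h2 := hdecay i j (d + 1) h1
        refine h2.trans ?_
        rw [hK]
        have hinv1 : (1 : ℝ) ≤ (1 - q)⁻¹ := by
          rw [le_inv_comm₀ one_pos h1q]
          linarith
        have hb2 : (1 : ℝ) ≤ 2 * (β : ℝ) := by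
          have : (1 : ℝ) ≤ (β : ℝ) := by exact_mod_cast hβ
          linarith
        calc C * q ^ (d + 1) = 1 * (C * q ^ (d + 1)) * 1 := by ring
          _ ≤ (2 * (β : ℝ)) * (C * q ^ (d + 1)) * (1 - q)⁻¹ := by
              apply mul_le_mul (mul_le_mul hb2 le_rfl (by positivity) (by positivity)) hinv1
                zero_le_one
              positivity
          _ = 2 * (β : ℝ) * C * q ^ (d + 1) * (1 - q)⁻¹ := by ring
    calc ∑ i ∈ Finset.univ.filter (fun i : Fin n => D i ≤ w), ‖F i j - Fd i j‖
        ≤ (Finset.univ.filter (fun i : Fin n => D i ≤ w)).card • K :=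
          Finset.sum_le_card_nsmul _ _ _ hterm
      _ = ((Finset.univ.filter (fun i : Fin n => D i ≤ w)).card : ℝ) * K := nsmul_eq_mul _ _
      _ ≤ (2 * w + 1 : ℕ) * K := by
          apply mul_le_mul_of_nonneg_right _ hKpos.le
          exact_mod_cast hcard
  -- far part
  have hB : ∑ i ∈ Finset.univ.filter (fun i => ¬ D i ≤ w), ‖F i j - Fd i j‖
      ≤ K := by
    set S₂ : Finset (Fin n) := Finset.univ.filter (fun i => ¬ D i ≤ w) with hS₂
    set L : Fin n → ℕ := fun i => (D i + β - 1) / β with hL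
    set ℓB : Fin n → ℕ := fun i => L i - d with hℓB
    have hS₂fact : ∀ i ∈ S₂, w + 1 ≤ D i ∧ d + 1 ≤ L i := by
      intro i hi
      have h1 : ¬ D i ≤ w := (Finset.mem_filter.mp hi).2
      constructor
      · omega
      · simp only [hL]
        rw [Nat.le_div_iff_mul_le hβ0]
        have : (d + 1) * β = w + β := by rw [hw]; ring
        omega
    have hfar : ∀ i ∈ S₂, ¬ G.edist i j ≤ (d : ℕ∞) := by
      intro i hi hc
      have h1 := hedist i j d hc
      have h2 := (hS₂fact i hi).1
      have : D i ≤ w := by rw [hw]; simpa [hD] using h1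
      omega
    have hpoint : ∀ i ∈ S₂, ‖F i j - Fd i j‖ ≤ C * q ^ (d + ℓB i) := by
      intro i hi
      rw [hFd i j, if_neg (hfar i hi), sub_zero]
      obtain ⟨hD1, hL1⟩ := hS₂fact i hi
      obtain ⟨l2, hl2⟩ : ∃ l2, L i = l2 + 1 := ⟨L i - 1, by omega⟩
      have hb1 : L i * β ≤ D i + β - 1 := by
        simp only [hL]
        exact Nat.div_mul_le_self _ _
      have he : L i * β = l2 * β + β := by rw [hl2]; ring
      have hlb : l2 * β < D i := by omega
      have h1 := hdecay' i j l2 hlb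
      have hexp : l2 + 1 = d + ℓB i := by simp only [hℓB]; omega
      rwa [hexp] at h1
    refine le_trans (Finset.sum_le_sum hpoint) (hgeo S₂ ℓB ?_ ?_)
    · intro i hi
      obtain ⟨hD1, hL1⟩ := hS₂fact i hi
      have h2 : L i ≤ D i := hceil_le _ (by omega)
      constructor
      · simp only [hℓB]; omega
      · have := hDn i
        simp only [hℓB]
        omega
    · intro m hm
      have hsub : S₂.filter (fun k => ℓB k = m) ⊆ S₂.filter (fun k => L k = m + d) := by
        intro k hk
        obtain ⟨hkS, hkm⟩ := Finset.mem_filter.mp hk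
        have := (hS₂fact k hkS).2
        rw [Finset.mem_filter]
        refine ⟨hkS, ?_⟩
        simp only [hℓB] at hkm
        omega
      refine le_trans (Finset.card_le_card hsub) ?_
      apply probing_aux_fiber hβ j S₂ D L (fun k => rfl)
        (fun k hk => by have := (hS₂fact k hk).1; omega)
      intro k hk k' hk' htt hss
      exact hside k k' htt hss
  -- assemble
  have htotal : ∑ i ∈ Finset.univ.filter (fun i => D i ≤ w), ‖F i j - Fd i j‖
      + ∑ i ∈ Finset.univ.filter (fun i => ¬ D i ≤ w), ‖F i j - Fd i j‖
      ≤ (2 * w + 1 : ℕ) * K + K := add_le_add hA hB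
  refine htotal.trans ?_
  rw [hK, hw]
  have hcast : ((2 * (d * β) + 1 : ℕ) : ℝ) = 2 * (d : ℝ) * (β : ℝ) + 1 := by push_cast; ring
  rw [hcast]
  rw [div_eq_mul_inv]
  have hpow : q ^ (d + 1) = q ^ d * q := pow_succ q d
  rw [hpow]
  apply le_of_eq
  ring
end

section
/- Suppose |B_{ij}| ≤ C q^{d(i,j)} with 0 ≤ q < 1, where d is graph distance in G, and let V₁,...,V_m be the color classes of a distance-d coloring of G. Then |tr(B) − ∑_ℓ v_ℓᴴ B v_ℓ| ≤ ∑_{ℓ=1}^m |V_ℓ|(|V_ℓ|−1)·C q^d, where v_ℓ = ∑_{i∈V_ℓ} e_i. -/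
open Matrix in
/-- Suppose `|B_{ij}| ≤ C·q^{d(i,j)}` with `0 ≤ q < 1`, where `d`
is the graph distance in `G` (phrased for every finite `s ≤ d(i,j)`, which for
`q < 1` is equivalent and also covers unreachable pairs), and let `V₁,…,V_m` be
the color classes (fibers of `col`) of a distance-`d` coloring of `G`. Then with
`v_ℓ = ∑_{i∈V_ℓ} e_i`,
`|tr(B) − ∑_ℓ v_ℓᴴ B v_ℓ| ≤ ∑_ℓ |V_ℓ|(|V_ℓ|−1)·C·q^d`. -/
theorem probing_trace_error_bound (n m d : ℕ) (B : Matrix (Fin n) (Fin n) ℂ)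
    (C q : ℝ) (hC : 0 < C) (hq0 : 0 ≤ q) (hq1 : q < 1)
    (G : SimpleGraph (Fin n))
    (hdecay : ∀ i j : Fin n, ∀ s : ℕ, (s : ℕ∞) ≤ G.edist i j →
      ‖B i j‖ ≤ C * q ^ s)
    (col : Fin n → Fin m)
    (hcolor : ∀ i j : Fin n, i ≠ j → col i = col j → (d : ℕ) < G.edist i j)
    (v : Fin m → Fin n → ℂ)
    (hv : ∀ (ℓ : Fin m) (i : Fin n), v ℓ i = if col i = ℓ then 1 else 0) :
    ‖B.trace - ∑ ℓ, (star (v ℓ)) ⬝ᵥ B.mulVec (v ℓ)‖ ≤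
      ∑ ℓ : Fin m, ((Finset.univ.filter (fun i => col i = ℓ)).card : ℝ) *
        (((Finset.univ.filter (fun i => col i = ℓ)).card - 1 : ℕ) : ℝ) *
          (C * q ^ d) := by
  classical
  set Vs : Fin m → Finset (Fin n) := fun ℓ => Finset.univ.filter (fun i => col i = ℓ) with hVs
  have hquad : ∀ ℓ, (star (v ℓ)) ⬝ᵥ B.mulVec (v ℓ) = ∑ i ∈ Vs ℓ, ∑ j ∈ Vs ℓ, B i j := by
    intro ℓ
    simp only [hVs, Finset.sum_filter, dotProduct, Matrix.mulVec, Pi.star_apply, hv,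
      apply_ite (star : ℂ → ℂ), star_one, star_zero, ite_mul, one_mul, zero_mul,
      mul_ite, mul_one, mul_zero]
  have htr : B.trace = ∑ ℓ, ∑ i ∈ Vs ℓ, B i i := by
    rw [Matrix.trace]
    exact (Finset.sum_fiberwise Finset.univ col (fun i => B i i)).symm
  have key : B.trace - ∑ ℓ, (star (v ℓ)) ⬝ᵥ B.mulVec (v ℓ)
      = - ∑ ℓ, ∑ i ∈ Vs ℓ, ∑ j ∈ (Vs ℓ).erase i, B i j := by
    rw [htr]
    simp only [hquad]
    rw [← Finset.sum_sub_distrib, ← Finset.sum_neg_distrib]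
    refine Finset.sum_congr rfl fun ℓ _ => ?_
    rw [← Finset.sum_sub_distrib, ← Finset.sum_neg_distrib]
    refine Finset.sum_congr rfl fun i hi => ?_
    rw [← Finset.add_sum_erase _ _ hi]
    ring
  rw [key, norm_neg]
  calc ‖∑ ℓ, ∑ i ∈ Vs ℓ, ∑ j ∈ (Vs ℓ).erase i, B i j‖
      ≤ ∑ ℓ, ∑ i ∈ Vs ℓ, ∑ j ∈ (Vs ℓ).erase i, ‖B i j‖ := by
        refine (norm_sum_le _ _).trans (Finset.sum_le_sum fun ℓ _ => ?_)
        refine (norm_sum_le _ _).trans (Finset.sum_le_sum fun i _ => ?_)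
        exact norm_sum_le _ _
    _ ≤ ∑ ℓ, ∑ i ∈ Vs ℓ, ∑ _j ∈ (Vs ℓ).erase i, (C * q ^ d) := by
        refine Finset.sum_le_sum fun ℓ _ => Finset.sum_le_sum fun i hi =>
          Finset.sum_le_sum fun j hj => ?_
        have hji : j ≠ i := Finset.ne_of_mem_erase hj
        have hjV : j ∈ Vs ℓ := Finset.mem_of_mem_erase hj
        have hci : col i = ℓ := (Finset.mem_filter.mp hi).2
        have hcj : col j = ℓ := (Finset.mem_filter.mp hjV).2
        exact hdecay i j d (le_of_lt (hcolor i j (fun h => hji h.symm) (hci.trans hcj.symm)))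
    _ ≤ ∑ ℓ : Fin m, ((Vs ℓ).card : ℝ) * (((Vs ℓ).card - 1 : ℕ) : ℝ) * (C * q ^ d) := by
        refine Finset.sum_le_sum fun ℓ _ => le_of_eq ?_
        have h1 : ∀ i ∈ Vs ℓ, ∑ _j ∈ (Vs ℓ).erase i, (C * q ^ d)
            = (((Vs ℓ).card - 1 : ℕ) : ℝ) * (C * q ^ d) := fun i hi => by
          rw [Finset.sum_const, Finset.card_erase_of_mem hi, nsmul_eq_mul]
        rw [Finset.sum_congr rfl h1, Finset.sum_const, nsmul_eq_mul, ← mul_assoc]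
end

section
/- Let A ∈ ℂ^{n×n} be β-banded with |[f(A)]_{ij}| ≤ C q^{d(i,j)}, 0 < q < 1, where in G(A) the distance between nodes i = ℓ + r(dβ+1) and j = ℓ + s(dβ+1) in the same color class of the banded distance-d coloring col(i) = ((i-1) mod (dβ+1)) + 1 satisfies d(i,j) ≥ |r−s|·d. Then the probing trace estimate T(f(A)) = ∑_ℓ v_ℓᴴ f(A) v_ℓ satisfies |tr(f(A)) − T(f(A))| ≤ 2n·C·q^d/(1−q^d). -/
open Finset

lemma geom_aux (x : ℝ) (hx0 : 0 ≤ x) (hx1 : x < 1) (N : ℕ) :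
    ∑ k ∈ Finset.range N, x ^ (k + 1) ≤ x / (1 - x) := by
  have h1 : (0:ℝ) < 1 - x := by linarith
  have hsum : ∑ k ∈ Finset.range N, x ^ (k + 1) = x * ∑ k ∈ Finset.range N, x ^ k := by
    rw [Finset.mul_sum]
    exact Finset.sum_congr rfl (fun k _ => by ring)
  rw [hsum, div_eq_mul_one_div]
  apply mul_le_mul_of_nonneg_left _ hx0
  have hxN : 0 ≤ x ^ N := pow_nonneg hx0 N
  have h2 : ∑ k ∈ Finset.range N, x ^ k = (1 - x ^ N) / (1 - x) := by
    rw [geom_sum_eq (ne_of_lt hx1)]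
    rw [div_eq_div_iff (by linarith) (by linarith)]
    ring
  rw [h2]
  gcongr
  linarith

lemma key_sum (n m d : ℕ) (hm : 0 < m) (q : ℝ) (hq0 : 0 < q) (hqd : q ^ d < 1) (i : Fin n) :
    ∑ j ∈ Finset.univ.filter (fun j : Fin n => ¬ j = i ∧ (j : ℕ) % m = (i : ℕ) % m),
      q ^ (((((i : ℕ) / m : ℤ)) - ((j : ℕ) / m : ℤ)).natAbs * d)
      ≤ 2 * q ^ d / (1 - q ^ d) := by
  set S := Finset.univ.filter (fun j : Fin n => ¬ j = i ∧ (j : ℕ) % m = (i : ℕ) % m) with hS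
  set T : Finset ℤ := ((Finset.range n).image (fun k : ℕ => ((k : ℤ) + 1))) ∪
      ((Finset.range n).image (fun k : ℕ => -((k : ℤ) + 1))) with hT
  have hinj : ∀ x ∈ S, ∀ y ∈ S,
      (fun j : Fin n => (((i : ℕ) / m : ℤ)) - ((j : ℕ) / m : ℤ)) x =
      (fun j : Fin n => (((i : ℕ) / m : ℤ)) - ((j : ℕ) / m : ℤ)) y → x = y := by
    intro j1 h1 j2 h2 hEq
    simp only [hS, Finset.mem_filter] at h1 h2
    simp only at hEq
    have hdiv : (j1 : ℕ) / m = (j2 : ℕ) / m := by omega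
    have hmod : (j1 : ℕ) % m = (j2 : ℕ) % m := h1.2.2.trans h2.2.2.symm
    have : (j1 : ℕ) = (j2 : ℕ) := by
      rw [← Nat.div_add_mod (j1 : ℕ) m, ← Nat.div_add_mod (j2 : ℕ) m, hdiv, hmod]
    exact Fin.ext this
  have hsub : S.image (fun j : Fin n => (((i : ℕ) / m : ℤ)) - ((j : ℕ) / m : ℤ)) ⊆ T := by
    intro t ht
    rcases Finset.mem_image.mp ht with ⟨j, hj, rfl⟩
    simp only [hS, Finset.mem_filter] at hj
    have hjn : (j : ℕ) / m < n := lt_of_le_of_lt (Nat.div_le_self _ _) j.isLt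
    have hin : (i : ℕ) / m < n := lt_of_le_of_lt (Nat.div_le_self _ _) i.isLt
    have hne : (i : ℕ) / m ≠ (j : ℕ) / m := by
      intro hdiv
      apply hj.2.1
      apply Fin.ext
      rw [← Nat.div_add_mod (j : ℕ) m, ← Nat.div_add_mod (i : ℕ) m, hdiv, hj.2.2]
    simp only [hT, Finset.mem_union, Finset.mem_image, Finset.mem_range]
    set a := (i : ℕ) / m with ha
    set b := (j : ℕ) / m with hb
    clear_value a b
    rcases Nat.lt_or_ge a b with hlt | hge
    · exact Or.inr ⟨b - a - 1, by omega, by push_cast; omega⟩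
    · exact Or.inl ⟨a - b - 1, by omega, by push_cast; omega⟩
  calc ∑ j ∈ S, q ^ ((((((i : ℕ) / m : ℤ)) - ((j : ℕ) / m : ℤ))).natAbs * d)
      = ∑ t ∈ S.image (fun j : Fin n => (((i : ℕ) / m : ℤ)) - ((j : ℕ) / m : ℤ)),
          q ^ (t.natAbs * d) :=
        (Finset.sum_image (f := fun t : ℤ => q ^ (t.natAbs * d)) hinj).symm
    _ ≤ ∑ t ∈ T, q ^ (t.natAbs * d) := by
        apply Finset.sum_le_sum_of_subset_of_nonneg hsub
        intro t _ _; positivity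
    _ ≤ 2 * q ^ d / (1 - q ^ d) := by
        have hdisj : Disjoint ((Finset.range n).image (fun k : ℕ => ((k : ℤ) + 1)))
            ((Finset.range n).image (fun k : ℕ => -((k : ℤ) + 1))) := by
          rw [Finset.disjoint_left]
          intro t ht1 ht2
          rcases Finset.mem_image.mp ht1 with ⟨a, _, rfl⟩
          rcases Finset.mem_image.mp ht2 with ⟨b, _, hb⟩
          omega
        rw [hT, Finset.sum_union hdisj,
          Finset.sum_image (f := fun t : ℤ => q ^ (t.natAbs * d))
            (fun a _ b _ h => by omega),
          Finset.sum_image (f := fun t : ℤ => q ^ (t.natAbs * d))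
            (fun a _ b _ h => by omega)]
        have h1 : ∀ k : ℕ, (((k : ℤ) + 1)).natAbs = k + 1 := by intro k; omega
        have h2 : ∀ k : ℕ, ((-((k : ℤ) + 1))).natAbs = k + 1 := by intro k; omega
        simp only [h1, h2]
        have hqd0 : 0 ≤ q ^ d := le_of_lt (pow_pos hq0 d)
        have hg := geom_aux (q ^ d) hqd0 hqd n
        have hrw : ∀ k : ℕ, q ^ ((k + 1) * d) = (q ^ d) ^ (k + 1) := by
          intro k; rw [← pow_mul, mul_comm]
        simp only [hrw]
        rw [div_eq_mul_one_div, two_mul, div_eq_mul_one_div] at *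
        linarith



open Matrix in
/-- Let `A ∈ ℂ^{n×n}` be `β`-banded, let `F = f(A)` satisfy
`|F_{ij}| ≤ C·q^{dd(i,j)}` (`0 < q < 1`, `dd` the geodesic distance in `G(A)`;
phrased for every finite `s ≤ dd(i,j)`), and suppose that for nodes
`i = ℓ + r(dβ+1)`, `j = ℓ + s(dβ+1)` in the same class of the banded
distance-`d` coloring `col(i) = ((i-1) mod (dβ+1)) + 1` (0-based:
`i mod (dβ+1)`) one has `dd(i,j) ≥ |r−s|·d`. Then the probing trace estimate
`T(F) = ∑_ℓ v_ℓᴴ F v_ℓ` satisfies `|tr(F) − T(F)| ≤ 2n·C·q^d/(1−q^d)`. -/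
theorem probing_trace_banded (n β d : ℕ) (hβ : 1 ≤ β) (hd : 1 ≤ d)
    (A F : Matrix (Fin n) (Fin n) ℂ) (C q : ℝ)
    (hC : 0 < C) (hq0 : 0 < q) (hq1 : q < 1)
    (hband : ∀ i j : Fin n, (β : ℤ) < |(i : ℤ) - (j : ℤ)| → A i j = 0)
    (dd : Fin n → Fin n → ℕ∞)
    (hdecay : ∀ i j : Fin n, ∀ s : ℕ, (s : ℕ∞) ≤ dd i j →
      ‖F i j‖ ≤ C * q ^ s)
    (hdist : ∀ i j : Fin n, (i : ℕ) % (d * β + 1) = (j : ℕ) % (d * β + 1) →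
      ((((i : ℕ) / (d * β + 1) : ℤ) - ((j : ℕ) / (d * β + 1) : ℤ)).natAbs * d : ℕ)
        ≤ dd i j)
    (v : ℕ → Fin n → ℂ)
    (hv : ∀ (ℓ : ℕ) (i : Fin n), v ℓ i = if (i : ℕ) % (d * β + 1) = ℓ then 1 else 0) :
    ‖F.trace -
        ∑ ℓ ∈ Finset.range (d * β + 1), (star (v ℓ)) ⬝ᵥ F.mulVec (v ℓ)‖ ≤
      2 * (n : ℝ) * C * q ^ d / (1 - q ^ d) := by
  set m := d * β + 1 with hmdef
  have hm : 0 < m := Nat.succ_pos _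
  have hqd : q ^ d < 1 := pow_lt_one₀ (le_of_lt hq0) hq1 (by omega)
  have hqd0 : 0 < q ^ d := pow_pos hq0 d
  -- Step 1: rewrite each quadratic form
  have h1 : ∀ ℓ : ℕ, (star (v ℓ)) ⬝ᵥ F.mulVec (v ℓ) =
      ∑ i : Fin n, ∑ j : Fin n,
        if (i : ℕ) % m = ℓ ∧ (j : ℕ) % m = ℓ then F i j else 0 := by
    intro ℓ
    simp only [dotProduct, Matrix.mulVec, Pi.star_apply, hv]
    refine Finset.sum_congr rfl fun i _ => ?_
    by_cases hP : (i : ℕ) % m = ℓ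
    · simp only [hP, if_true, star_one, one_mul, true_and]
      refine Finset.sum_congr rfl fun j _ => ?_
      by_cases hQ : (j : ℕ) % m = ℓ <;> simp [hQ]
    · simp [hP]
  -- Step 2: sum over colors
  have h2 : ∑ ℓ ∈ Finset.range m, (star (v ℓ)) ⬝ᵥ F.mulVec (v ℓ) =
      ∑ i : Fin n, ∑ j : Fin n,
        if (i : ℕ) % m = (j : ℕ) % m then F i j else 0 := by
    simp only [h1]
    rw [Finset.sum_comm]
    refine Finset.sum_congr rfl fun i _ => ?_
    rw [Finset.sum_comm]
    refine Finset.sum_congr rfl fun j _ => ?_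
    rw [Finset.sum_eq_single ((i : ℕ) % m)]
    · by_cases h : (i : ℕ) % m = (j : ℕ) % m
      · simp [h]
      · simp only [true_and]
        rw [if_neg (fun hc => h hc.symm), if_neg h]
    · intro b _ hb
      rw [if_neg]
      rintro ⟨hb1, -⟩
      exact hb hb1.symm
    · intro hcon
      exact absurd (Finset.mem_range.mpr (Nat.mod_lt _ hm)) hcon
  -- Step 3: split off the diagonal
  have h3 : ∀ i : Fin n,
      (∑ j : Fin n, if (i : ℕ) % m = (j : ℕ) % m then F i j else 0) =
      F i i + ∑ j ∈ Finset.univ.filter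
        (fun j : Fin n => ¬ j = i ∧ (j : ℕ) % m = (i : ℕ) % m), F i j := by
    intro i
    rw [← Finset.sum_filter]
    have hset : Finset.univ.filter (fun j : Fin n => (i : ℕ) % m = (j : ℕ) % m) =
        insert i (Finset.univ.filter
          (fun j : Fin n => ¬ j = i ∧ (j : ℕ) % m = (i : ℕ) % m)) := by
      ext j
      simp only [Finset.mem_filter, Finset.mem_univ, true_and, Finset.mem_insert]
      constructor
      · intro h
        by_cases hji : j = i
        · exact Or.inl hji
        · exact Or.inr ⟨hji, h.symm⟩
      · rintro (rfl | ⟨-, h⟩)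
        · rfl
        · exact h.symm
    rw [hset, Finset.sum_insert (by simp)]
  have h4 : F.trace - ∑ ℓ ∈ Finset.range m, (star (v ℓ)) ⬝ᵥ F.mulVec (v ℓ) =
      - ∑ i : Fin n, ∑ j ∈ Finset.univ.filter
        (fun j : Fin n => ¬ j = i ∧ (j : ℕ) % m = (i : ℕ) % m), F i j := by
    rw [h2, Matrix.trace]
    simp only [Matrix.diag, h3, Finset.sum_add_distrib]
    ring
  rw [h4, norm_neg]
  calc ‖∑ i : Fin n, ∑ j ∈ Finset.univ.filter
        (fun j : Fin n => ¬ j = i ∧ (j : ℕ) % m = (i : ℕ) % m), F i j‖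
      ≤ ∑ i : Fin n, ∑ j ∈ Finset.univ.filter
        (fun j : Fin n => ¬ j = i ∧ (j : ℕ) % m = (i : ℕ) % m),
          ‖F i j‖ := by
        refine (norm_sum_le _ _).trans ?_
        exact Finset.sum_le_sum fun i _ => norm_sum_le _ _
    _ ≤ ∑ i : Fin n, ∑ j ∈ Finset.univ.filter
        (fun j : Fin n => ¬ j = i ∧ (j : ℕ) % m = (i : ℕ) % m),
          C * q ^ (((((i : ℕ) / m : ℤ)) - ((j : ℕ) / m : ℤ)).natAbs * d) := by
        refine Finset.sum_le_sum fun i _ => Finset.sum_le_sum fun j hj => ?_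
        simp only [Finset.mem_filter] at hj
        exact hdecay i j _ (hdist i j hj.2.2.symm)
    _ ≤ ∑ i : Fin n, C * (2 * q ^ d / (1 - q ^ d)) := by
        refine Finset.sum_le_sum fun i _ => ?_
        rw [← Finset.mul_sum]
        exact mul_le_mul_of_nonneg_left (key_sum n m d hm q hq0 hqd i) (le_of_lt hC)
    _ ≤ 2 * (n : ℝ) * C * q ^ d / (1 - q ^ d) := by
        rw [Finset.sum_const, Finset.card_univ, Fintype.card_fin, nsmul_eq_mul]
        apply le_of_eq
        ring
end

section
/- Let G be a regular D-dimensional lattice with n nodes, B a matrix with |B_{ij}| ≤ C q^{d(i,j)} (0 < q < 1, d the lattice graph distance), and use the distance-d coloring col(w) = ∑_k (w^{[k]} mod (d+1))(d+1)^k + 1 whose color classes form sub-lattices with node distances that are multiples of d+1 ≥ d. Then the probing trace estimate satisfies |tr(B) − ∑_ℓ v_ℓᴴ B v_ℓ| ≤ 2·C·D·n·∑_{δ=1}^∞ δ^{D−1} q^{δd} = 2CDn·Li_{1−D}(q^d). -/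
set_option maxHeartbeats 1000000


lemma aux_pow_succ (m D : ℕ) : m ^ D + D * m ^ (D - 1) ≤ (m + 1) ^ D := by
  induction D with
  | zero => simp
  | succ D ih =>
    rcases Nat.eq_zero_or_pos D with hD | hD
    · subst hD; simp [pow_succ]
    · have h1 : m ^ (D - 1) * m = m ^ D := by
        rw [← pow_succ]; congr 1; omega
      have h2 : (m + 1) ^ (D + 1) = (m + 1) ^ D * (m + 1) := pow_succ _ _
      have h3 : (m ^ D + D * m ^ (D - 1)) * (m + 1) ≤ (m + 1) ^ D * (m + 1) :=
        Nat.mul_le_mul_right _ ih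
      have h4 : (m ^ D + D * m ^ (D - 1)) * (m + 1)
          = m ^ D * m + m ^ D + D * m ^ D + D * m ^ (D - 1) := by
        rw [← h1]; ring
      have h5 : m ^ (D + 1) = m ^ D * m := pow_succ _ _
      have h6 : (D + 1) - 1 = D := by omega
      have h7 : (D + 1) * m ^ D = D * m ^ D + m ^ D := by ring
      rw [h6]
      omega

lemma aux_sum_pow (D m : ℕ) (hm : 1 ≤ m) :
    D * ∑ u ∈ Finset.Ico 1 m, u ^ (D - 1) + 1 ≤ m ^ D := by
  induction m with
  | zero => omega
  | succ m ih =>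
    rcases Nat.eq_zero_or_pos m with h | h
    · subst h; simp [Nat.one_pow]
    · have ih' := ih h
      have key : ∑ u ∈ Finset.Ico 1 (m+1), u^(D-1)
          = (∑ u ∈ Finset.Ico 1 m, u^(D-1)) + m^(D-1) := Finset.sum_Ico_succ_top h _
      rw [key, Nat.mul_add]
      have := aux_pow_succ m D
      omega

noncomputable def sph (D m : ℕ) : Finset (Fin D → ℤ) :=
  (Fintype.piFinset fun _ => Finset.Icc (-(m : ℤ)) (m : ℤ)).filter
    (fun a => ∑ k, (a k).natAbs = m)

lemma mem_sph {D m : ℕ} {a : Fin D → ℤ} :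
    a ∈ sph D m ↔ ∑ k, (a k).natAbs = m := by
  constructor
  · intro h; exact (Finset.mem_filter.1 h).2
  · intro h
    refine Finset.mem_filter.2 ⟨Fintype.mem_piFinset.2 fun k => ?_, h⟩
    have h2 : (a k).natAbs ≤ ∑ k, (a k).natAbs :=
      Finset.single_le_sum (f := fun k => (a k).natAbs) (fun _ _ => Nat.zero_le _)
        (Finset.mem_univ k)
    rw [h] at h2
    rw [Finset.mem_Icc]
    omega

lemma sph_zero_card (D : ℕ) : (sph D 0).card ≤ 1 := by
  refine Finset.card_le_one.2 fun a ha b hb => ?_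
  have ha' := mem_sph.1 ha
  have hb' := mem_sph.1 hb
  funext k
  have h1 : (a k).natAbs ≤ ∑ k, (a k).natAbs :=
    Finset.single_le_sum (f := fun k => (a k).natAbs) (fun _ _ => Nat.zero_le _)
      (Finset.mem_univ k)
  have h2 : (b k).natAbs ≤ ∑ k, (b k).natAbs :=
    Finset.single_le_sum (f := fun k => (b k).natAbs) (fun _ _ => Nat.zero_le _)
      (Finset.mem_univ k)
  omega

noncomputable def sfib (D m s : ℕ) : ℕ :=
  ((sph (D+1) m).filter (fun a => (a 0).natAbs = s)).card

lemma sph_dec (D m : ℕ) :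
    (sph (D+1) m).card = ∑ s ∈ Finset.range (m+1), sfib D m s := by
  unfold sfib
  refine Finset.card_eq_sum_card_fiberwise (f := fun a : Fin (D+1) → ℤ => (a 0).natAbs)
    (t := Finset.range (m+1)) fun a ha => ?_
  have h := mem_sph.1 ha
  rw [Fin.sum_univ_succ] at h
  rw [Finset.mem_coe, Finset.mem_range]
  show (a 0).natAbs < m + 1
  omega

lemma tail_sum {D m : ℕ} {a : Fin (D+1) → ℤ} (ha : a ∈ sph (D+1) m) :
    (fun k : Fin D => a k.succ) ∈ sph D (m - (a 0).natAbs) := by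
  have h := mem_sph.1 ha
  rw [Fin.sum_univ_succ] at h
  exact mem_sph.2 (by omega)

lemma sfib_zero (D m : ℕ) : sfib D m 0 ≤ (sph D m).card := by
  apply Finset.card_le_card_of_injOn (fun a => fun k : Fin D => a k.succ)
  · intro a ha
    rw [Finset.mem_coe, Finset.mem_filter] at ha; rw [Finset.mem_coe]
    have := tail_sum ha.1
    rwa [ha.2, Nat.sub_zero] at this
  · intro a ha b hb hab
    rw [Finset.mem_coe, Finset.mem_filter] at ha hb
    funext k
    refine Fin.cases ?_ ?_ k
    · omega
    · intro k; exact congrFun hab k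

lemma sfib_le (D m s : ℕ) : sfib D m s ≤ 2 * (sph D (m - s)).card := by
  have h2 : (2 : ℕ) * (sph D (m - s)).card
      = ((Finset.univ : Finset Bool) ×ˢ sph D (m - s)).card := by
    rw [Finset.card_product]; simp [mul_comm]
  rw [h2]
  apply Finset.card_le_card_of_injOn
    (fun a => (decide (a 0 < 0), fun k : Fin D => a k.succ))
  · intro a ha
    rw [Finset.mem_coe, Finset.mem_filter] at ha; rw [Finset.mem_coe]
    refine Finset.mem_product.2 ⟨Finset.mem_univ _, ?_⟩
    rw [← ha.2]
    exact tail_sum ha.1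
  · intro a ha b hb hab
    rw [Finset.mem_coe, Finset.mem_filter] at ha hb
    have h1 : (decide (a 0 < 0)) = (decide (b 0 < 0)) := congrArg Prod.fst hab
    have h2 : ∀ k : Fin D, a k.succ = b k.succ :=
      fun k => congrFun (congrArg Prod.snd hab) k
    have h3 : a 0 = b 0 := by
      have := decide_eq_decide.mp h1
      omega
    funext k
    refine Fin.cases h3 h2 k

lemma sph_card_le (D : ℕ) : ∀ m : ℕ, 1 ≤ m → (sph D m).card ≤ 2 * D * m ^ (D - 1) := by
  induction D with
  | zero =>
    intro m hm
    have h : sph 0 m = ∅ := by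
      rw [Finset.eq_empty_iff_forall_notMem]
      intro a ha
      have := mem_sph.1 ha
      simp at this
      omega
    simp [h]
  | succ D ih =>
    intro m hm
    have hdec := sph_dec D m
    have hsplit : ∑ s ∈ Finset.range (m+1), sfib D m s
        = sfib D m 0 + ((∑ s ∈ Finset.Ico 1 m, sfib D m s) + sfib D m m) := by
      rw [Finset.range_eq_Ico,
        ← Finset.sum_Ico_consecutive _ (Nat.zero_le 1) (by omega : 1 ≤ m+1),
        ← Finset.sum_Ico_consecutive _ (hm : 1 ≤ m) (by omega : m ≤ m+1)]
      rw [Finset.sum_Ico_succ_top (by omega : m ≤ m)]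
      have h01 : Finset.Ico 0 1 = {0} := rfl
      rw [h01, Finset.sum_singleton]
      have hmm : Finset.Ico m m = ∅ := by simp
      rw [hmm, Finset.sum_empty, Nat.zero_add]
    have hmid : ∑ s ∈ Finset.Ico 1 m, sfib D m s
        ≤ ∑ s ∈ Finset.Ico 1 m, 2 * (2 * D * (m - s) ^ (D - 1)) := by
      apply Finset.sum_le_sum
      intro s hs
      rw [Finset.mem_Ico] at hs
      calc sfib D m s ≤ 2 * (sph D (m - s)).card := sfib_le D m s
        _ ≤ 2 * (2 * D * (m - s) ^ (D - 1)) :=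
            Nat.mul_le_mul_left _ (ih (m - s) (by omega))
    have hre : ∑ s ∈ Finset.Ico 1 m, 2 * (2 * D * (m - s) ^ (D - 1))
        = ∑ u ∈ Finset.Ico 1 m, 2 * (2 * D * u ^ (D - 1)) := by
      refine Finset.sum_nbij' (fun s => m - s) (fun u => m - u) ?_ ?_ ?_ ?_ ?_ <;>
        intro x hx <;> simp only [Finset.mem_Ico] at hx ⊢ <;> omega
    have htop : sfib D m m ≤ 2 := by
      calc sfib D m m ≤ 2 * (sph D (m - m)).card := sfib_le D m m
        _ ≤ 2 * 1 := Nat.mul_le_mul_left _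
            (by rw [Nat.sub_self]; exact sph_zero_card D)
        _ = 2 := by omega
    have hzero : sfib D m 0 ≤ 2 * D * m ^ (D - 1) := by
      rcases Nat.eq_zero_or_pos D with h | h
      · have he : sph D m = ∅ := by
          subst h
          rw [Finset.eq_empty_iff_forall_notMem]
          intro a ha
          have := mem_sph.1 ha
          simp at this
          omega
        calc sfib D m 0 ≤ (sph D m).card := sfib_zero D m
          _ = 0 := by rw [he]; rfl
          _ ≤ _ := by omega
      · calc sfib D m 0 ≤ (sph D m).card := sfib_zero D m
          _ ≤ 2 * D * m ^ (D - 1) := ih m hm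
    have hsum := aux_sum_pow D m hm
    have harith : 2 * D * m ^ (D - 1) + 2 * m ^ D ≤ 2 * D * m ^ D + 2 := by
      rcases Nat.eq_zero_or_pos D with h | h
      · subst h; simp
      rcases Nat.lt_or_ge m 2 with h2 | h2
      · have hm1 : m = 1 := by omega
        subst hm1; simp
      · have e1 : m ^ D = m * m ^ (D - 1) := by
          rw [← pow_succ']
          congr 1
          omega
        have e2 : 2 * m ^ (D - 1) ≤ m ^ D := by
          rw [e1]
          exact Nat.mul_le_mul_right _ h2
        rcases Nat.eq_or_lt_of_le h with h3 | h3
        · rw [← h3]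
          have he : m ^ (1 - 1) = 1 := by norm_num
          rw [he]
          omega
        · have e3 : 2 * D * m ^ (D - 1) ≤ D * m ^ D := by
            calc 2 * D * m ^ (D - 1) = D * (2 * m ^ (D - 1)) := by ring
              _ ≤ D * m ^ D := Nat.mul_le_mul_left _ e2
          have e4 : 2 * m ^ D ≤ D * m ^ D := Nat.mul_le_mul_right _ (by omega)
          have e5 : 2 * D * m ^ D = 2 * (D * m ^ D) := by ring
          omega
    rw [hdec, hsplit]
    have hmid' := le_trans hmid (le_of_eq hre)
    have hS : ∑ u ∈ Finset.Ico 1 m, 2 * (2 * D * u ^ (D - 1))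
        = 4 * (D * ∑ u ∈ Finset.Ico 1 m, u ^ (D - 1)) := by
      rw [Finset.mul_sum, Finset.mul_sum]
      apply Finset.sum_congr rfl
      intro x hx
      ring
    rw [hS] at hmid'
    have hgoal : 2 * (D + 1) * m ^ (D + 1 - 1) = 2 * D * m ^ D + 2 * m ^ D := by
      have hh : D + 1 - 1 = D := by omega
      rw [hh]; ring
    rw [hgoal]
    generalize hA : (2 : ℕ) * D * m ^ (D - 1) = A at *
    generalize hP : m ^ D = P at *
    generalize hSS : D * ∑ u ∈ Finset.Ico 1 m, u ^ (D - 1) = S at *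
    omega


lemma digits_sum_lt {b : ℕ} (hb : 0 < b) :
    ∀ (D : ℕ) (f : Fin D → ℕ), (∀ k, f k < b) →
      ∑ k, f k * b ^ (k : ℕ) < b ^ D := by
  intro D
  induction D with
  | zero => intro f hf; simp
  | succ D ih =>
    intro f hf
    rw [Fin.sum_univ_succ]
    have h1 : ∑ k : Fin D, f k.succ * b ^ (k.succ : ℕ)
        = b * ∑ k : Fin D, f k.succ * b ^ (k : ℕ) := by
      rw [Finset.mul_sum]
      apply Finset.sum_congr rfl
      intro k _
      have : (k.succ : ℕ) = (k : ℕ) + 1 := rfl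
      rw [this, pow_succ]
      ring
    rw [h1]
    have h2 : ∑ k : Fin D, f k.succ * b ^ (k : ℕ) < b ^ D :=
      ih (fun k => f k.succ) (fun k => hf k.succ)
    have h3 : b * (∑ k : Fin D, f k.succ * b ^ (k : ℕ) + 1) ≤ b * b ^ D :=
      Nat.mul_le_mul_left _ h2
    rw [Nat.mul_add, Nat.mul_one] at h3
    have h4 : f 0 < b := hf 0
    have h5 : b ^ (D + 1) = b * b ^ D := by rw [pow_succ]; ring
    simp only [Fin.val_zero, pow_zero, mul_one]
    omega

lemma digits_unique {b : ℕ} (hb : 0 < b) :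
    ∀ (D : ℕ) (f g : Fin D → ℕ), (∀ k, f k < b) → (∀ k, g k < b) →
      (∑ k, f k * b ^ (k : ℕ)) = (∑ k, g k * b ^ (k : ℕ)) → ∀ k, f k = g k := by
  intro D
  induction D with
  | zero => intro f g _ _ _ k; exact absurd k.2 (by omega)
  | succ D ih =>
    intro f g hf hg h k
    rw [Fin.sum_univ_succ, Fin.sum_univ_succ] at h
    have e : ∀ (f : Fin (D+1) → ℕ), ∑ k : Fin D, f k.succ * b ^ (k.succ : ℕ)
        = b * ∑ k : Fin D, f k.succ * b ^ (k : ℕ) := by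
      intro f
      rw [Finset.mul_sum]
      apply Finset.sum_congr rfl
      intro k _
      have : (k.succ : ℕ) = (k : ℕ) + 1 := rfl
      rw [this, pow_succ]
      ring
    rw [e f, e g] at h
    simp only [Fin.val_zero, pow_zero, mul_one] at h
    have h0 : f 0 = g 0 := by
      have hf0 := hf 0
      have hg0 := hg 0
      have m1 : (f 0 + b * ∑ k : Fin D, f k.succ * b ^ (k : ℕ)) % b = f 0 % b :=
        Nat.add_mul_mod_self_left _ _ _
      have m2 : (g 0 + b * ∑ k : Fin D, g k.succ * b ^ (k : ℕ)) % b = g 0 % b :=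
        Nat.add_mul_mod_self_left _ _ _
      rw [Nat.mod_eq_of_lt hf0] at m1
      rw [Nat.mod_eq_of_lt hg0] at m2
      rw [h] at m1
      rw [m2] at m1
      exact m1.symm
    have htail : ∑ k : Fin D, f k.succ * b ^ (k : ℕ) = ∑ k : Fin D, g k.succ * b ^ (k : ℕ) := by
      rw [h0] at h
      have := Nat.add_left_cancel h
      exact Nat.eq_of_mul_eq_mul_left hb this
    have := ih (fun k => f k.succ) (fun k => g k.succ) (fun k => hf k.succ)
      (fun k => hg k.succ) htail
    refine Fin.cases h0 (fun k => this k) k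

-- summability of the series
lemma summable_aux (D : ℕ) (r : ℝ) (hr0 : 0 ≤ r) (hr1 : r < 1) :
    Summable (fun δ : ℕ => ((δ : ℝ) + 1) ^ (D - 1) * r ^ (δ + 1)) := by
  have h : Summable (fun n : ℕ => (n : ℝ) ^ (D - 1) * r ^ n) :=
    summable_pow_mul_geometric_of_norm_lt_one (D - 1) (by rwa [Real.norm_eq_abs, abs_of_nonneg hr0])
  have h2 := h.comp_injective (Nat.succ_injective)
  refine h2.congr fun δ => ?_
  simp only [Function.comp_apply, Nat.succ_eq_add_one]
  push_cast
  ring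

lemma per_point {D d : ℕ} (hd : 1 ≤ d) {N : Fin D → ℕ} {q : ℝ} (hq0 : 0 < q) (hq1 : q < 1)
    (i : ∀ k : Fin D, Fin (N k))
    (F : Finset (∀ k : Fin D, Fin (N k)))
    (hFne : ∀ j ∈ F, j ≠ i)
    (hFcong : ∀ j ∈ F, ∀ k, (j k : ℕ) % (d + 1) = (i k : ℕ) % (d + 1)) :
    ∑ j ∈ F, q ^ (∑ k, ((i k : ℤ) - (j k : ℤ)).natAbs)
      ≤ 2 * (D : ℝ) * ∑' δ : ℕ, ((δ : ℝ) + 1) ^ (D - 1) * (q ^ d) ^ (δ + 1) := by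
  classical
  set r : ℝ := q ^ d with hr
  have hr0 : 0 < r := pow_pos hq0 d
  have hr1 : r < 1 := pow_lt_one₀ hq0.le hq1 (by omega)
  -- divisibility of coordinate differences
  have hdvd : ∀ j ∈ F, ∀ k, ((d:ℤ) + 1) ∣ ((i k : ℤ) - (j k : ℤ)) := by
    intro j hj k
    have h : (j k : ℕ) ≡ (i k : ℕ) [MOD d+1] := hFcong j hj k
    have h2 := h.dvd
    have e : ((d + 1 : ℕ) : ℤ) = (d : ℤ) + 1 := by push_cast; ring
    rwa [e] at h2
  have hdistdvd : ∀ j ∈ F, (d+1) ∣ ∑ k, ((i k : ℤ) - (j k : ℤ)).natAbs := by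
    intro j hj
    apply Finset.dvd_sum
    intro k _
    have h2 : ((d + 1 : ℕ) : ℤ) ∣ ((i k : ℤ) - (j k : ℤ)) := by
      have := hdvd j hj k
      have e : ((d + 1 : ℕ) : ℤ) = (d : ℤ) + 1 := by push_cast; ring
      rwa [e]
    have h3 := Int.natAbs_dvd_natAbs.mpr h2
    rwa [Int.natAbs_natCast] at h3
  set M : (∀ k : Fin D, Fin (N k)) → ℕ :=
    fun j => (∑ k, ((i k : ℤ) - (j k : ℤ)).natAbs) / (d+1) with hMdef
  have hdist : ∀ j ∈ F, ∑ k, ((i k : ℤ) - (j k : ℤ)).natAbs = (d+1) * M j :=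
    fun j hj => (Nat.mul_div_cancel' (hdistdvd j hj)).symm
  have hM1 : ∀ j ∈ F, 1 ≤ M j := by
    intro j hj
    have hne := hFne j hj
    have hex : ∃ k, j k ≠ i k := by
      by_contra h
      push_neg at h
      exact hne (funext h)
    obtain ⟨k, hk⟩ := hex
    have hki : (i k : ℤ) ≠ (j k : ℤ) := by
      intro he
      apply hk
      have : (j k : ℕ) = (i k : ℕ) := by exact_mod_cast he.symm
      exact Fin.ext this
    have hkpos : 0 < ((i k : ℤ) - (j k : ℤ)).natAbs := by omega
    have hle : ((i k : ℤ) - (j k : ℤ)).natAbs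
        ≤ ∑ k, ((i k : ℤ) - (j k : ℤ)).natAbs :=
      Finset.single_le_sum (f := fun k => ((i k : ℤ) - (j k : ℤ)).natAbs)
        (fun _ _ => Nat.zero_le _) (Finset.mem_univ k)
    by_contra hM0
    have hM0' : M j = 0 := by omega
    have := hdist j hj
    rw [hM0', Nat.mul_zero] at this
    omega
  -- per-term bound
  have hstep1 : ∀ j ∈ F, q ^ (∑ k, ((i k : ℤ) - (j k : ℤ)).natAbs) ≤ r ^ M j := by
    intro j hj
    rw [hdist j hj, pow_mul]
    apply pow_le_pow_left₀ (pow_nonneg hq0.le _)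
    exact pow_le_pow_of_le_one hq0.le hq1.le (by omega)
  set T : Finset ℕ := F.image M with hT
  have hTmem : ∀ m ∈ T, 1 ≤ m := by
    intro m hm
    obtain ⟨j, hj, hjm⟩ := Finset.mem_image.1 hm
    exact hjm ▸ hM1 j hj
  -- fiber cards
  have hcard : ∀ m ∈ T, (F.filter (fun j => M j = m)).card ≤ (sph D m).card := by
    intro m hm
    apply Finset.card_le_card_of_injOn
      (fun j => fun k : Fin D => ((i k : ℤ) - (j k : ℤ)) / ((d : ℤ) + 1))
    · intro j hj
      rw [Finset.mem_coe, Finset.mem_filter] at hj; rw [Finset.mem_coe]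
      obtain ⟨hjF, hjM⟩ := hj
      apply mem_sph.2
      have he : ∀ k, ((d : ℤ) + 1) * (((i k : ℤ) - (j k : ℤ)) / ((d : ℤ) + 1))
          = (i k : ℤ) - (j k : ℤ) := fun k => Int.mul_ediv_cancel' (hdvd j hjF k)
      have hmul : (d+1) * ∑ k, (((i k : ℤ) - (j k : ℤ)) / ((d : ℤ) + 1)).natAbs
          = (d+1) * m := by
        rw [Finset.mul_sum]
        have hterm : ∀ k : Fin D, (d+1) * (((i k : ℤ) - (j k : ℤ)) / ((d : ℤ) + 1)).natAbs
            = ((i k : ℤ) - (j k : ℤ)).natAbs := by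
          intro k
          have h1 : (((d : ℤ) + 1) * (((i k : ℤ) - (j k : ℤ)) / ((d : ℤ) + 1))).natAbs
              = ((i k : ℤ) - (j k : ℤ)).natAbs := by rw [he k]
          rw [Int.natAbs_mul] at h1
          have h2 : ((d : ℤ) + 1).natAbs = d + 1 := by omega
          rw [h2] at h1
          exact h1
        rw [Finset.sum_congr rfl (fun k _ => hterm k), hdist j hjF, hjM]
      exact Nat.eq_of_mul_eq_mul_left (by omega) hmul
    · intro a ha b hb hab
      rw [Finset.mem_coe, Finset.mem_filter] at ha hb
      funext k
      have h1 : ((i k : ℤ) - (a k : ℤ)) / ((d : ℤ) + 1)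
          = ((i k : ℤ) - (b k : ℤ)) / ((d : ℤ) + 1) := congrFun hab k
      have ea : (i k : ℤ) - (a k : ℤ)
          = ((d : ℤ) + 1) * (((i k : ℤ) - (a k : ℤ)) / ((d : ℤ) + 1)) :=
        (Int.mul_ediv_cancel' (hdvd a ha.1 k)).symm
      have eb : (i k : ℤ) - (b k : ℤ)
          = ((d : ℤ) + 1) * (((i k : ℤ) - (b k : ℤ)) / ((d : ℤ) + 1)) :=
        (Int.mul_ediv_cancel' (hdvd b hb.1 k)).symm
      have hab' : (i k : ℤ) - (a k : ℤ) = (i k : ℤ) - (b k : ℤ) := by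
        rw [ea, h1, ← eb]
      have : (a k : ℕ) = (b k : ℕ) := by omega
      exact Fin.ext this
  -- summability
  have hsum : Summable (fun δ : ℕ => ((δ : ℝ) + 1) ^ (D - 1) * r ^ (δ + 1)) :=
    summable_aux D r hr0.le hr1
  have hnonneg : ∀ δ : ℕ, 0 ≤ ((δ : ℝ) + 1) ^ (D - 1) * r ^ (δ + 1) := by
    intro δ
    positivity
  -- main chain
  calc ∑ j ∈ F, q ^ (∑ k, ((i k : ℤ) - (j k : ℤ)).natAbs)
      ≤ ∑ j ∈ F, r ^ M j := Finset.sum_le_sum hstep1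
    _ = ∑ m ∈ T, ∑ j ∈ F.filter (fun j => M j = m), r ^ M j :=
        (Finset.sum_fiberwise_of_maps_to (fun j hj => Finset.mem_image_of_mem M hj) _).symm
    _ = ∑ m ∈ T, ((F.filter (fun j => M j = m)).card : ℝ) * r ^ m := by
        apply Finset.sum_congr rfl
        intro m hm
        rw [Finset.sum_congr rfl (fun j hj => by rw [(Finset.mem_filter.1 hj).2]),
          Finset.sum_const, nsmul_eq_mul]
    _ ≤ ∑ m ∈ T, ((2 * D * m ^ (D-1) : ℕ) : ℝ) * r ^ m := by
        apply Finset.sum_le_sum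
        intro m hm
        apply mul_le_mul_of_nonneg_right _ (pow_nonneg hr0.le m)
        exact_mod_cast le_trans (hcard m hm) (sph_card_le D m (hTmem m hm))
    _ = 2 * (D : ℝ) * ∑ m ∈ T, ((m : ℝ)) ^ (D-1) * r ^ m := by
        rw [Finset.mul_sum]
        apply Finset.sum_congr rfl
        intro m hm
        push_cast
        ring
    _ ≤ 2 * (D : ℝ) * ∑' δ : ℕ, ((δ : ℝ) + 1) ^ (D - 1) * r ^ (δ + 1) := by
        apply mul_le_mul_of_nonneg_left _ (by positivity)
        have hinj : ∀ x ∈ T, ∀ y ∈ T, x - 1 = y - 1 → x = y := by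
          intro x hx y hy hxy
          have := hTmem x hx
          have := hTmem y hy
          omega
        have himg : ∑ δ ∈ T.image (fun m : ℕ => m - 1), ((δ : ℝ) + 1) ^ (D - 1) * r ^ (δ + 1)
            = ∑ m ∈ T, ((m : ℝ)) ^ (D-1) * r ^ m := by
          rw [Finset.sum_image hinj]
          apply Finset.sum_congr rfl
          intro m hm
          have hm1 := hTmem m hm
          have e1 : ((m - 1 : ℕ) : ℝ) = (m : ℝ) - 1 := by
            rw [Nat.cast_sub hm1]
            norm_num
          have e2 : (m - 1) + 1 = m := by omega
          rw [e1, e2]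
          ring_nf
        rw [← himg]
        exact Summable.sum_le_tsum _ (fun δ _ => hnonneg δ) hsum

open Matrix in
/-- Let `G` be the regular `D`-dimensional lattice on
`{0,…,N₁-1} × ⋯ × {0,…,N_D-1}` with `n` nodes, whose graph distance is the
1-norm distance, let `B` satisfy `|B_{ij}| ≤ C·q^{d(i,j)}` (`0 < q < 1`), and
use the distance-`d` coloring `col(w) = ∑_k (w^[k] mod (d+1))·(d+1)^k + 1`
(0-based: without the `+1`), whose classes are the fibers of `col`. Then the
probing trace estimate satisfies
`|tr(B) − ∑_ℓ v_ℓᴴ B v_ℓ| ≤ 2·C·D·n·∑_{δ=1}^∞ δ^{D−1} q^{δd} = 2CDn·Li_{1−D}(q^d)`. -/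
theorem probing_trace_lattice (D d : ℕ) (hD : 1 ≤ D) (hd : 1 ≤ d)
    (N : Fin D → ℕ)
    (B : Matrix (∀ k : Fin D, Fin (N k)) (∀ k : Fin D, Fin (N k)) ℂ)
    (C q : ℝ) (hC : 0 < C) (hq0 : 0 < q) (hq1 : q < 1)
    (hdecay : ∀ i j : ∀ k : Fin D, Fin (N k),
      ‖B i j‖ ≤ C * q ^ (∑ k, ((i k : ℤ) - (j k : ℤ)).natAbs))
    (col : (∀ k : Fin D, Fin (N k)) → ℕ)
    (hcol : ∀ w, col w = ∑ k, ((w k : ℕ) % (d + 1)) * (d + 1) ^ (k : ℕ))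
    (v : ℕ → (∀ k : Fin D, Fin (N k)) → ℂ)
    (hv : ∀ (ℓ : ℕ) (w : ∀ k : Fin D, Fin (N k)),
      v ℓ w = if col w = ℓ then 1 else 0) :
    ‖B.trace -
        ∑ ℓ ∈ Finset.range ((d + 1) ^ D), (star (v ℓ)) ⬝ᵥ B.mulVec (v ℓ)‖ ≤
      2 * C * (D : ℝ) * (Fintype.card (∀ k : Fin D, Fin (N k)) : ℝ) *
        ∑' δ : ℕ, ((δ : ℝ) + 1) ^ (D - 1) * (q ^ d) ^ (δ + 1) := by
  classical
  set P := (d + 1) ^ D with hP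
  -- each color is < P
  have hcolP : ∀ w, col w < P := by
    intro w
    rw [hcol]
    exact digits_sum_lt (by omega) D _ (fun k => Nat.mod_lt _ (by omega))
  -- congruence from equal colors
  have hcong : ∀ w w', col w = col w' → ∀ k, (w k : ℕ) % (d+1) = (w' k : ℕ) % (d+1) := by
    intro w w' h k
    have h2 : (∑ k, ((w k : ℕ) % (d + 1)) * (d + 1) ^ (k : ℕ))
        = ∑ k, ((w' k : ℕ) % (d + 1)) * (d + 1) ^ (k : ℕ) := by
      rw [← hcol, ← hcol, h]
    exact digits_unique (by omega) D _ _ (fun k => Nat.mod_lt _ (by omega))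
      (fun k => Nat.mod_lt _ (by omega)) h2 k
  -- algebraic reduction of the probing sum
  have hS : ∑ ℓ ∈ Finset.range P, (star (v ℓ)) ⬝ᵥ B.mulVec (v ℓ)
      = ∑ i, ∑ j, (if col j = col i then B i j else 0) := by
    have h1 : ∀ ℓ, (star (v ℓ)) ⬝ᵥ B.mulVec (v ℓ)
        = ∑ i, (if col i = ℓ then (∑ j, if col j = ℓ then B i j else 0) else 0) := by
      intro ℓ
      simp only [dotProduct, Matrix.mulVec, Pi.star_apply, hv]
      apply Finset.sum_congr rfl
      intro i _
      by_cases h : col i = ℓ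
      · simp only [h, if_true, star_one, one_mul]
        apply Finset.sum_congr rfl
        intro j _
        by_cases h' : col j = ℓ
        · simp [h']
        · simp [h']
      · simp [h]
    rw [Finset.sum_congr rfl (fun ℓ _ => h1 ℓ), Finset.sum_comm]
    apply Finset.sum_congr rfl
    intro i _
    rw [Finset.sum_ite_eq (Finset.range P) (col i)
      (fun ℓ => ∑ j, if col j = ℓ then B i j else 0)]
    simp [Finset.mem_range.2 (hcolP i)]
  -- trace
  have htr : B.trace = ∑ i, B i i := rfl
  -- split off the diagonal
  have hsplit : ∀ i, (∑ j, if col j = col i then B i j else 0)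
      = B i i + ∑ j ∈ Finset.univ.erase i, (if col j = col i then B i j else 0) := by
    intro i
    rw [← Finset.add_sum_erase _ _ (Finset.mem_univ i)]
    simp
  -- difference
  have hdiff : B.trace - ∑ ℓ ∈ Finset.range P, (star (v ℓ)) ⬝ᵥ B.mulVec (v ℓ)
      = - ∑ i, ∑ j ∈ Finset.univ.erase i, (if col j = col i then B i j else 0) := by
    rw [hS, htr, ← Finset.sum_sub_distrib]
    rw [← Finset.sum_neg_distrib]
    apply Finset.sum_congr rfl
    intro i _
    rw [hsplit i]
    ring
  set tS : ℝ := ∑' δ : ℕ, ((δ : ℝ) + 1) ^ (D - 1) * (q ^ d) ^ (δ + 1) with htS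
  -- per-point bound
  have hi : ∀ i, ‖∑ j ∈ Finset.univ.erase i,
      (if col j = col i then B i j else 0)‖ ≤ C * (2 * (D : ℝ) * tS) := by
    intro i
    set F : Finset (∀ k : Fin D, Fin (N k)) :=
      (Finset.univ.erase i).filter (fun j => col j = col i) with hF
    have hFne : ∀ j ∈ F, j ≠ i := by
      intro j hj
      exact Finset.ne_of_mem_erase (Finset.mem_filter.1 hj).1
    have hFcong : ∀ j ∈ F, ∀ k, (j k : ℕ) % (d + 1) = (i k : ℕ) % (d + 1) := by
      intro j hj k
      exact hcong j i (Finset.mem_filter.1 hj).2 k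
    calc ‖∑ j ∈ Finset.univ.erase i, (if col j = col i then B i j else 0)‖
        ≤ ∑ j ∈ Finset.univ.erase i, ‖if col j = col i then B i j else 0‖ :=
          norm_sum_le _ _
      _ ≤ ∑ j ∈ Finset.univ.erase i,
            (if col j = col i then C * q ^ (∑ k, ((i k : ℤ) - (j k : ℤ)).natAbs) else 0) := by
          apply Finset.sum_le_sum
          intro j _
          by_cases h : col j = col i
          · simp only [h, if_true]
            exact hdecay i j
          · simp [h]
      _ = ∑ j ∈ F, C * q ^ (∑ k, ((i k : ℤ) - (j k : ℤ)).natAbs) :=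
          (Finset.sum_filter _ _).symm
      _ = C * ∑ j ∈ F, q ^ (∑ k, ((i k : ℤ) - (j k : ℤ)).natAbs) := by
          rw [Finset.mul_sum]
      _ ≤ C * (2 * (D : ℝ) * tS) :=
          mul_le_mul_of_nonneg_left (per_point hd hq0 hq1 i F hFne hFcong) hC.le
  -- assemble
  calc ‖B.trace -
        ∑ ℓ ∈ Finset.range P, (star (v ℓ)) ⬝ᵥ B.mulVec (v ℓ)‖
      = ‖∑ i, ∑ j ∈ Finset.univ.erase i,
          (if col j = col i then B i j else 0)‖ := by
        rw [hdiff, norm_neg]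
    _ ≤ ∑ i, ‖∑ j ∈ Finset.univ.erase i,
          (if col j = col i then B i j else 0)‖ := norm_sum_le _ _
    _ ≤ ∑ _i : (∀ k : Fin D, Fin (N k)), C * (2 * (D : ℝ) * tS) :=
        Finset.sum_le_sum (fun i _ => hi i)
    _ = (Fintype.card (∀ k : Fin D, Fin (N k)) : ℝ) * (C * (2 * (D : ℝ) * tS)) := by
        rw [Finset.sum_const, Finset.card_univ, nsmul_eq_mul]
    _ = 2 * C * (D : ℝ) * (Fintype.card (∀ k : Fin D, Fin (N k)) : ℝ) * tS := by
        ring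
end

section
/- Let A ∈ ℂ^{n×n} be normal and suppose there is a polynomial p_d of degree ≤ d with |f(z) − p_d(z)| ≤ ε on the spectrum of A. Let f(A)^[d] be the probing approximation built from a distance-2d coloring of |G(A)|, and suppose the probing approximation is exact for p_d(A), i.e. p_d(A)^[d] = p_d(A). Then ‖f(A) − f(A)^[d]‖_F ≤ 2√n·ε. -/
open Matrix in
lemma sumSq_mulVec {n : ℕ} (U : Matrix (Fin n) (Fin n) ℂ) (h1 : star U * U = 1)
    (x : Fin n → ℂ) :
    ∑ i, Complex.normSq ((U *ᵥ x) i) = ∑ i, Complex.normSq (x i) := by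
  have key : star (U *ᵥ x) ⬝ᵥ (U *ᵥ x) = star x ⬝ᵥ x := by
    rw [Matrix.star_mulVec, ← Matrix.dotProduct_mulVec, Matrix.mulVec_mulVec]
    rw [show Uᴴ * U = 1 from h1, Matrix.one_mulVec]
  have h2 : ∀ y : Fin n → ℂ, star y ⬝ᵥ y = ((∑ i, Complex.normSq (y i) : ℝ) : ℂ) := by
    intro y
    simp only [dotProduct, Pi.star_apply, Complex.star_def, Complex.ofReal_sum]
    congr 1; ext i
    rw [mul_comm, Complex.mul_conj]
  rw [h2, h2] at key
  exact_mod_cast key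

open Matrix in
lemma spec_bound' {n : ℕ} (U : Matrix (Fin n) (Fin n) ℂ) (h1 : star U * U = 1)
    (h2 : U * star U = 1)
    (g : Fin n → ℂ) (ε : ℝ)
    (hg : ∀ i, ‖g i‖ ≤ ε) (w : Fin n → ℂ) :
    ∑ i, Complex.normSq (((U * Matrix.diagonal g * star U) *ᵥ w) i)
      ≤ ε ^ 2 * ∑ i, Complex.normSq (w i) := by
  have hsum := sumSq_mulVec U h1
  have hsum' := sumSq_mulVec (star U) (by rw [star_star]; exact h2)
  have hrw : (U * Matrix.diagonal g * star U) *ᵥ w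
      = U *ᵥ (Matrix.diagonal g *ᵥ ((star U) *ᵥ w)) := by
    simp [Matrix.mulVec_mulVec, Matrix.mul_assoc]
  rw [hrw, hsum]
  set u := (star U) *ᵥ w with hu
  calc ∑ i, Complex.normSq ((Matrix.diagonal g *ᵥ u) i)
      ≤ ∑ i, ε ^ 2 * Complex.normSq (u i) := by
        refine Finset.sum_le_sum fun i _ => ?_
        rw [Matrix.mulVec_diagonal, Complex.normSq_mul]
        have : Complex.normSq (g i) ≤ ε ^ 2 := by
          rw [← Complex.sq_norm]
          exact pow_le_pow_left₀ (norm_nonneg _) (hg i) 2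
        exact mul_le_mul_of_nonneg_right this (Complex.normSq_nonneg _)
    _ = ε ^ 2 * ∑ i, Complex.normSq (w i) := by rw [← Finset.mul_sum, hsum' w]

lemma aeval_conj {n : ℕ} (U : Matrix (Fin n) (Fin n) ℂ) (h1 : star U * U = 1)
    (h2 : U * star U = 1) (lam : Fin n → ℂ) (p : Polynomial ℂ) :
    Polynomial.aeval (U * Matrix.diagonal lam * star U) p
      = U * Matrix.diagonal (fun i => p.eval (lam i)) * star U := by
  have hcancel : ∀ X : Matrix (Fin n) (Fin n) ℂ, star U * (U * X) = X := by
    intro X; rw [← mul_assoc, h1, one_mul]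
  have hpow : ∀ k : ℕ, (U * Matrix.diagonal lam * star U) ^ k
      = U * (Matrix.diagonal lam) ^ k * star U := by
    intro k
    induction k with
    | zero => simp [h2]
    | succ k ih =>
      rw [pow_succ, ih, pow_succ]
      simp only [mul_assoc, hcancel]
  have hdiag : Polynomial.aeval (Matrix.diagonal lam) p
      = Matrix.diagonal (fun i => p.eval (lam i)) := by
    have h3 := Polynomial.aeval_algHom_apply (Matrix.diagonalAlgHom (α := ℂ) (n := Fin n) ℂ) lam p
    simp only [Matrix.diagonalAlgHom_apply] at h3
    have h5 : (Polynomial.aeval lam) p = fun i => p.eval (lam i) := by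
      funext i
      have h4 := Polynomial.aeval_algHom_apply (Pi.evalAlgHom ℂ (fun _ => ℂ) i) lam p
      simp only [Pi.evalAlgHom_apply] at h4
      rw [← h4, Polynomial.coe_aeval_eq_eval]
    rw [h3, h5]
  rw [← hdiag]
  conv_lhs => rw [Polynomial.aeval_eq_sum_range (R := ℂ)]
  rw [Polynomial.aeval_eq_sum_range (R := ℂ)]
  rw [Finset.mul_sum, Finset.sum_mul]
  refine Finset.sum_congr rfl fun k _ => ?_
  rw [hpow]
  simp only [smul_mul_assoc, mul_smul_comm]

lemma sqrt_sum_sq_add_le {ι : Type*} [Fintype ι] (a b : ι → ℝ) :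
    Real.sqrt (∑ i, (a i + b i) ^ 2) ≤
      Real.sqrt (∑ i, a i ^ 2) + Real.sqrt (∑ i, b i ^ 2) := by
  have hn : ∀ c : ι → ℝ, ‖(WithLp.equiv 2 (ι → ℝ)).symm c‖ = Real.sqrt (∑ i, c i ^ 2) := by
    intro c
    rw [EuclideanSpace.norm_eq]
    congr 1
    refine Finset.sum_congr rfl fun i _ => ?_
    rw [Real.norm_eq_abs, sq_abs]
    rfl
  calc Real.sqrt (∑ i, (a i + b i) ^ 2)
      = ‖(WithLp.equiv 2 (ι → ℝ)).symm (fun i => a i + b i)‖ := (hn _).symm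
    _ = ‖(WithLp.equiv 2 (ι → ℝ)).symm a + (WithLp.equiv 2 (ι → ℝ)).symm b‖ := rfl
    _ ≤ ‖(WithLp.equiv 2 (ι → ℝ)).symm a‖ + ‖(WithLp.equiv 2 (ι → ℝ)).symm b‖ := norm_add_le _ _
    _ = _ := by rw [hn, hn]


open Matrix



/-- Let `A ∈ ℂ^{n×n}` be normal, with spectral decomposition
`A = U·diag(λ)·Uᴴ` (`U` unitary) and `f(A) = U·diag(f∘λ)·Uᴴ`. Suppose there is
a polynomial `p` of degree `≤ d` with `|f(λᵢ) − p(λᵢ)| ≤ ε` on the spectrum of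
`A`. Let `F^[d]` be the probing approximation of `F = f(A)` built from a
distance-`2d` coloring of the undirected graph `|G(A)|` (classes are the fibers
of `col`), keeping `[F v_ℓ]_i` when `d̄(i,j) ≤ d` (with `j ∈ V_ℓ`) and `0`
otherwise, and suppose the analogous probing approximation of `p(A)` is exact,
i.e. `p(A)^[d] = p(A)`. Then `‖F − F^[d]‖_F ≤ 2√n·ε`. -/
theorem probing_sparse_poly_approx (n m d : ℕ) (A : Matrix (Fin n) (Fin n) ℂ)
    (f : ℂ → ℂ) (F : Matrix (Fin n) (Fin n) ℂ)
    (U : Matrix (Fin n) (Fin n) ℂ) (hU : U ∈ Matrix.unitaryGroup (Fin n) ℂ)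
    (lam : Fin n → ℂ)
    (hA : A = U * Matrix.diagonal lam * star U)
    (hF : F = U * Matrix.diagonal (fun i => f (lam i)) * star U)
    (p : Polynomial ℂ) (hdeg : p.natDegree ≤ d)
    (ε : ℝ) (hε : 0 ≤ ε)
    (happrox : ∀ i : Fin n, ‖f (lam i) - p.eval (lam i)‖ ≤ ε)
    (G : SimpleGraph (Fin n))
    (hG : ∀ i j : Fin n, G.Adj i j ↔ i ≠ j ∧ (A i j ≠ 0 ∨ A j i ≠ 0))
    (col : Fin n → Fin m)
    (hcolor : ∀ i j : Fin n, i ≠ j → col i = col j → (2 * d : ℕ) < G.edist i j)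
    (Fd Pd : Matrix (Fin n) (Fin n) ℂ)
    (hFd : ∀ i j : Fin n, Fd i j =
      if G.edist i j ≤ (d : ℕ∞) then
        ∑ k ∈ Finset.univ.filter (fun k => col k = col j), F i k
      else 0)
    (hPd : ∀ i j : Fin n, Pd i j =
      if G.edist i j ≤ (d : ℕ∞) then
        ∑ k ∈ Finset.univ.filter (fun k => col k = col j), (Polynomial.aeval A p) i k
      else 0)
    (hexact : Pd = Polynomial.aeval A p) :
    Real.sqrt (∑ i, ∑ j, ‖F i j - Fd i j‖ ^ 2) ≤
      2 * Real.sqrt n * ε := by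
  classical
  obtain ⟨h1, h2⟩ := (Unitary.mem_iff).mp hU
  set g : Fin n → ℂ := fun i => f (lam i) - p.eval (lam i) with hg
  set E : Matrix (Fin n) (Fin n) ℂ := U * Matrix.diagonal g * star U with hEdef
  have hP : Polynomial.aeval A p
      = U * Matrix.diagonal (fun i => p.eval (lam i)) * star U := by
    rw [hA]; exact aeval_conj U h1 h2 lam p
  have hEeq : F - Polynomial.aeval A p = E := by
    rw [hF, hP, hEdef, ← sub_mul, ← mul_sub, ← Matrix.diagonal_sub]
  have hspec : ∀ w : Fin n → ℂ,
      ∑ i, Complex.normSq ((E *ᵥ w) i) ≤ ε ^ 2 * ∑ i, Complex.normSq (w i) :=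
    spec_bound' U h1 h2 g ε happrox
  -- probing vectors
  set v : Fin m → (Fin n → ℂ) := fun ℓ k => if col k = ℓ then 1 else 0 with hv
  -- entry formula for the probing error
  have hDm : ∀ i j, Fd i j - Polynomial.aeval A p i j
      = if G.edist i j ≤ (d : ℕ∞) then (E *ᵥ v (col j)) i else 0 := by
    intro i j
    have hPij : Polynomial.aeval A p i j = Pd i j := by rw [hexact]
    rw [hPij, hFd, hPd]
    split
    · rw [← Finset.sum_sub_distrib]
      have hk : ∀ k, F i k - Polynomial.aeval A p i k = E i k := by
        intro k; rw [← hEeq]; rfl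
      calc ∑ k ∈ Finset.univ.filter (fun k => col k = col j),
              (F i k - Polynomial.aeval A p i k)
          = ∑ k ∈ Finset.univ.filter (fun k => col k = col j), E i k :=
            Finset.sum_congr rfl fun k _ => hk k
        _ = ∑ k, E i k * v (col j) k := by
            rw [Finset.sum_filter]
            refine Finset.sum_congr rfl fun k _ => ?_
            by_cases h : col k = col j <;> simp [hv, h]
        _ = (E *ᵥ v (col j)) i := rfl
    · simp
  -- injectivity of `col` on balls of radius d
  have hcolinj : ∀ i : Fin n,
      ∀ a ∈ Finset.univ.filter (fun j => G.edist i j ≤ (d : ℕ∞)),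
      ∀ b ∈ Finset.univ.filter (fun j => G.edist i j ≤ (d : ℕ∞)),
      col a = col b → a = b := by
    intro i a ha b hb hab
    by_contra hne
    have ha' := (Finset.mem_filter.mp ha).2
    have hb' := (Finset.mem_filter.mp hb).2
    have h3 := hcolor a b hne hab
    have h4 : G.edist a b ≤ ((2 * d : ℕ) : ℕ∞) := by
      calc G.edist a b ≤ G.edist a i + G.edist i b := SimpleGraph.edist_triangle
        _ ≤ (d : ℕ∞) + (d : ℕ∞) := add_le_add (by rwa [SimpleGraph.edist_comm]) hb'
        _ = ((2 * d : ℕ) : ℕ∞) := by push_cast; ring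
    exact absurd h4 (not_le.mpr h3)
  have hrow : ∀ i, ∑ j, Complex.normSq (Fd i j - Polynomial.aeval A p i j)
      ≤ ∑ ℓ, Complex.normSq ((E *ᵥ v ℓ) i) := by
    intro i
    set T := Finset.univ.filter (fun j => G.edist i j ≤ (d : ℕ∞)) with hT
    have h5 : ∑ j, Complex.normSq (Fd i j - Polynomial.aeval A p i j)
        = ∑ j ∈ T, Complex.normSq ((E *ᵥ v (col j)) i) := by
      rw [hT, Finset.sum_filter]
      refine Finset.sum_congr rfl fun j _ => ?_
      rw [hDm i j]
      by_cases h : G.edist i j ≤ (d : ℕ∞) <;> simp [h]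
    calc ∑ j, Complex.normSq (Fd i j - Polynomial.aeval A p i j)
        = ∑ ℓ ∈ T.image col, Complex.normSq ((E *ᵥ v ℓ) i) := by
          rw [h5, Finset.sum_image (hcolinj i)]
      _ ≤ ∑ ℓ, Complex.normSq ((E *ᵥ v ℓ) i) :=
          Finset.sum_le_sum_of_subset_of_nonneg (Finset.subset_univ _)
            (fun ℓ _ _ => Complex.normSq_nonneg _)
  have hDbound : ∑ i, ∑ j, Complex.normSq (Fd i j - Polynomial.aeval A p i j)
      ≤ n * ε ^ 2 := by
    calc ∑ i, ∑ j, Complex.normSq (Fd i j - Polynomial.aeval A p i j)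
        ≤ ∑ i, ∑ ℓ, Complex.normSq ((E *ᵥ v ℓ) i) :=
          Finset.sum_le_sum fun i _ => hrow i
      _ = ∑ ℓ, ∑ i, Complex.normSq ((E *ᵥ v ℓ) i) := Finset.sum_comm
      _ ≤ ∑ ℓ, ε ^ 2 * ∑ k, Complex.normSq (v ℓ k) :=
          Finset.sum_le_sum fun ℓ _ => hspec (v ℓ)
      _ = ε ^ 2 * ∑ ℓ, ∑ k, Complex.normSq (v ℓ k) := by rw [Finset.mul_sum]
      _ = ε ^ 2 * n := by
          congr 1
          have hvv : ∀ ℓ k, Complex.normSq (v ℓ k) = if col k = ℓ then (1 : ℝ) else 0 := by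
            intro ℓ k; by_cases h : col k = ℓ <;> simp [hv, h]
          simp only [hvv]
          rw [Finset.sum_comm]
          simp
      _ = n * ε ^ 2 := by ring
  have hEbound : ∑ i, ∑ j, Complex.normSq (E i j) ≤ n * ε ^ 2 := by
    have hcolb : ∀ j, ∑ i, Complex.normSq (E i j) ≤ ε ^ 2 := by
      intro j
      have hs := hspec (Pi.single j 1)
      have he : (E *ᵥ Pi.single j 1) = fun i => E i j := by
        rw [Matrix.mulVec_single]; simp; rfl
      have h1' : ∑ k, Complex.normSq ((Pi.single j (1 : ℂ) : Fin n → ℂ) k) = 1 := by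
        simp [Pi.single_apply, apply_ite Complex.normSq]
      rw [he, h1'] at hs
      simpa using hs
    calc ∑ i, ∑ j, Complex.normSq (E i j)
        = ∑ j, ∑ i, Complex.normSq (E i j) := Finset.sum_comm
      _ ≤ ∑ _j : Fin n, ε ^ 2 := Finset.sum_le_sum fun j _ => hcolb j
      _ = n * ε ^ 2 := by simp [Finset.sum_const, nsmul_eq_mul]
  -- triangle inequality assembly
  have habs : ∀ i j : Fin n, ‖F i j - Fd i j‖
      ≤ ‖E i j‖ + ‖Fd i j - Polynomial.aeval A p i j‖ := by
    intro i j
    have hEij : E i j = F i j - Polynomial.aeval A p i j := by rw [← hEeq]; rfl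
    have hsplit : F i j - Fd i j
        = E i j - (Fd i j - Polynomial.aeval A p i j) := by rw [hEij]; ring
    rw [hsplit]
    exact norm_sub_le _ _
  set a : Fin n × Fin n → ℝ := fun q => ‖E q.1 q.2‖ with hadef
  set b : Fin n × Fin n → ℝ := fun q => ‖Fd q.1 q.2 - Polynomial.aeval A p q.1 q.2‖
    with hbdef
  have hsq : Real.sqrt ((n : ℝ) * ε ^ 2) = Real.sqrt n * ε := by
    rw [Real.sqrt_mul (Nat.cast_nonneg n), Real.sqrt_sq hε]
  calc Real.sqrt (∑ i, ∑ j, ‖F i j - Fd i j‖ ^ 2)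
      = Real.sqrt (∑ q : Fin n × Fin n, ‖F q.1 q.2 - Fd q.1 q.2‖ ^ 2) :=
        congrArg Real.sqrt (Fintype.sum_prod_type'
          (f := fun i j => ‖F i j - Fd i j‖ ^ 2)).symm
    _ ≤ Real.sqrt (∑ q : Fin n × Fin n, (a q + b q) ^ 2) := by
        apply Real.sqrt_le_sqrt
        refine Finset.sum_le_sum fun q _ => ?_
        exact pow_le_pow_left₀ (norm_nonneg _) (habs q.1 q.2) 2
    _ ≤ Real.sqrt (∑ q, a q ^ 2) + Real.sqrt (∑ q, b q ^ 2) := sqrt_sum_sq_add_le a b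
    _ ≤ Real.sqrt ((n : ℝ) * ε ^ 2) + Real.sqrt ((n : ℝ) * ε ^ 2) := by
        refine add_le_add (Real.sqrt_le_sqrt ?_) (Real.sqrt_le_sqrt ?_)
        · calc ∑ q : Fin n × Fin n, a q ^ 2
              = ∑ i, ∑ j, Complex.normSq (E i j) := by
                rw [show (fun q : Fin n × Fin n => a q ^ 2)
                    = fun q => Complex.normSq (E q.1 q.2) from
                  funext fun q => Complex.sq_norm _]
                exact Fintype.sum_prod_type' (f := fun i j => Complex.normSq (E i j))
            _ ≤ (n : ℝ) * ε ^ 2 := hEbound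
        · calc ∑ q : Fin n × Fin n, b q ^ 2
              = ∑ i, ∑ j, Complex.normSq (Fd i j - Polynomial.aeval A p i j) := by
                rw [show (fun q : Fin n × Fin n => b q ^ 2)
                    = fun q => Complex.normSq (Fd q.1 q.2 - Polynomial.aeval A p q.1 q.2) from
                  funext fun q => Complex.sq_norm _]
                exact Fintype.sum_prod_type'
                  (f := fun i j => Complex.normSq (Fd i j - Polynomial.aeval A p i j))
            _ ≤ (n : ℝ) * ε ^ 2 := hDbound
    _ = 2 * Real.sqrt n * ε := by rw [hsq]; ring
end
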